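/- arXiv:1911.08166 — 8 statements merged into one kernel-verified Lean document; each statement's English description precedes it below -/
import Mathlib

section
/- Let α ∈ (0,1] and θ ∈ (−∞, 1/2), and let ω_k (k ≥ 0) be the Maclaurin coefficients of the FBT-θ generating function. Then ω₀ = ((3−2θ)/(2−2θ))^α, ω₁ = φ₀ω₀/ψ₀, ω₂ = [(φ₀−ψ₁)ω₁ + φ₁ω₀]/(2ψ₀), and for every k ≥ 3, ω_k = (1/(k·ψ₀)) · Σ_{j=1}^{3} [φ_{j−1} − (k−j)ψ_j] ω_{k−j}, where φ₀ = −(α/2)(2θ²−5θ+4), φ₁ = −α(2θ−1)(1−θ), φ₂ = −(αθ/2)(2θ−1), ψ₀ = (1/2)(3−2θ)(1−θ), ψ₁ = (1/2)(1−2θ)(3θ−4), ψ₂ = (1/2)(1−θ)(1−6θ), ψ₃ = (1/2)θ(1−2θ). -/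
open Complex

set_option maxHeartbeats 1000000

lemma myAnalyticIter {s : Set ℂ} {h : ℂ → ℂ}
    (hh : AnalyticOnNhd ℂ h s) (n : ℕ) : AnalyticOnNhd ℂ (iteratedDeriv n h) s := by
  induction n with
  | zero => simpa [iteratedDeriv_zero] using hh
  | succ n ih => rw [iteratedDeriv_succ]; exact ih.deriv

lemma myIterAdd {s : Set ℂ} (hs : IsOpen s) {h₁ h₂ : ℂ → ℂ}
    (H1 : AnalyticOnNhd ℂ h₁ s) (H2 : AnalyticOnNhd ℂ h₂ s) (n : ℕ) :
    ∀ x ∈ s, iteratedDeriv n (fun ξ => h₁ ξ + h₂ ξ) x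
      = iteratedDeriv n h₁ x + iteratedDeriv n h₂ x := by
  induction n with
  | zero => intro x hx; simp [iteratedDeriv_zero]
  | succ n ih =>
    intro x hx
    have hev : iteratedDeriv n (fun ξ => h₁ ξ + h₂ ξ)
        =ᶠ[nhds x] fun y => iteratedDeriv n h₁ y + iteratedDeriv n h₂ y :=
      Filter.eventuallyEq_of_mem (hs.mem_nhds hx) (fun y hy => ih y hy)
    have d1 : DifferentiableAt ℂ (iteratedDeriv n h₁) x :=
      (myAnalyticIter H1 n x hx).differentiableAt
    have d2 : DifferentiableAt ℂ (iteratedDeriv n h₂) x :=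
      (myAnalyticIter H2 n x hx).differentiableAt
    rw [iteratedDeriv_succ, hev.deriv_eq, deriv_fun_add d1 d2,
      ← iteratedDeriv_succ, ← iteratedDeriv_succ]

lemma myIterConstMul {s : Set ℂ} (hs : IsOpen s) (c : ℂ) {h : ℂ → ℂ}
    (H : AnalyticOnNhd ℂ h s) (n : ℕ) :
    ∀ x ∈ s, iteratedDeriv n (fun ξ => c * h ξ) x = c * iteratedDeriv n h x := by
  induction n with
  | zero => intro x hx; simp [iteratedDeriv_zero]
  | succ n ih =>
    intro x hx
    have hev : iteratedDeriv n (fun ξ => c * h ξ)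
        =ᶠ[nhds x] fun y => c * iteratedDeriv n h y :=
      Filter.eventuallyEq_of_mem (hs.mem_nhds hx) (fun y hy => ih y hy)
    have d : DifferentiableAt ℂ (iteratedDeriv n h) x :=
      (myAnalyticIter H n x hx).differentiableAt
    rw [iteratedDeriv_succ, hev.deriv_eq, deriv_const_mul c d, ← iteratedDeriv_succ]

lemma myIterShift {s : Set ℂ} (hs : IsOpen s) {h : ℂ → ℂ}
    (H : AnalyticOnNhd ℂ h s) (n : ℕ) :
    ∀ x ∈ s, iteratedDeriv n (fun ξ => ξ * h ξ) x
      = (n : ℂ) * iteratedDeriv (n - 1) h x + x * iteratedDeriv n h x := by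
  induction n with
  | zero => intro x hx; simp [iteratedDeriv_zero]
  | succ n ih =>
    intro x hx
    have hev : iteratedDeriv n (fun ξ => ξ * h ξ)
        =ᶠ[nhds x] fun y => (n : ℂ) * iteratedDeriv (n - 1) h y + y * iteratedDeriv n h y :=
      Filter.eventuallyEq_of_mem (hs.mem_nhds hx) (fun y hy => ih y hy)
    have d1 : DifferentiableAt ℂ (iteratedDeriv (n - 1) h) x :=
      (myAnalyticIter H (n - 1) x hx).differentiableAt
    have d2 : DifferentiableAt ℂ (iteratedDeriv n h) x :=
      (myAnalyticIter H n x hx).differentiableAt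
    rw [iteratedDeriv_succ, hev.deriv_eq,
      deriv_fun_add (d1.const_mul _) (differentiableAt_fun_id.fun_mul d2),
      deriv_const_mul _ d1, deriv_fun_mul differentiableAt_fun_id d2]
    have hstep : (n : ℂ) * deriv (iteratedDeriv (n - 1) h) x = (n : ℂ) * iteratedDeriv n h x := by
      rcases Nat.eq_zero_or_pos n with h0 | hpos
      · subst h0; simp
      · rw [← iteratedDeriv_succ, Nat.sub_add_cancel hpos]
    rw [hstep, ← iteratedDeriv_succ]
    simp only [Nat.add_sub_cancel, deriv_id'']
    push_cast
    ring

lemma myIterZero {g : ℂ → ℂ} (hg : g =ᶠ[nhds (0:ℂ)] fun _ => 0) (n : ℕ) :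
    iteratedDeriv n g 0 = 0 := by
  have h1 : g =ᶠ[nhdsWithin (0:ℂ) Set.univ] fun _ => (0:ℂ) := by
    rwa [nhdsWithin_univ]
  have h2 : iteratedFDerivWithin ℂ n g Set.univ 0
      = iteratedFDerivWithin ℂ n (fun _ : ℂ => (0:ℂ)) Set.univ 0 :=
    h1.iteratedFDerivWithin_eq (hg.self_of_nhds) n
  have h3 : iteratedDeriv n g 0 = iteratedDeriv n (fun _ : ℂ => (0:ℂ)) 0 := by
    rw [← iteratedDerivWithin_univ, ← iteratedDerivWithin_univ,
      iteratedDerivWithin_eq_iteratedFDerivWithin, iteratedDerivWithin_eq_iteratedFDerivWithin, h2]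
  rw [h3]
  have : ∀ m : ℕ, iteratedDeriv m (fun _ : ℂ => (0:ℂ)) = fun _ => 0 := by
    intro m
    induction m with
    | zero => simp [iteratedDeriv_zero]
    | succ m ih => rw [iteratedDeriv_succ, ih]; funext y; simp
  rw [this n]


/-- recursive formula for the Maclaurin coefficients (convolution
weights) of the FBT-θ generating function
`ω^{(α)}(ξ) = (1−θ+θξ)^{−α}·[(3/2−θ) − (2−2θ)ξ + (1/2−θ)ξ²]^{α}`. -/
theorem fbt_theta_weights_recursion (α θ : ℝ) (hα : α ∈ Set.Ioc (0:ℝ) 1) (hθ : θ < 1/2)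
    (ω : ℕ → ℝ)
    (hω : ∀ k : ℕ, (ω k : ℂ) =
      iteratedDeriv k
        (fun ξ : ℂ =>
          ((1 : ℂ) - (θ : ℂ) + (θ : ℂ) * ξ) ^ (-(α : ℂ)) *
            (((3/2 : ℂ) - (θ : ℂ)) - ((2 : ℂ) - 2 * (θ : ℂ)) * ξ
              + ((1/2 : ℂ) - (θ : ℂ)) * ξ ^ 2) ^ (α : ℂ)) 0
        / (Nat.factorial k : ℂ))
    (φ0 φ1 φ2 ψ0 ψ1 ψ2 ψ3 : ℝ)
    (hφ0 : φ0 = -(α/2) * (2*θ^2 - 5*θ + 4))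
    (hφ1 : φ1 = -α * (2*θ - 1) * (1 - θ))
    (hφ2 : φ2 = -(α*θ/2) * (2*θ - 1))
    (hψ0 : ψ0 = (1/2) * (3 - 2*θ) * (1 - θ))
    (hψ1 : ψ1 = (1/2) * (1 - 2*θ) * (3*θ - 4))
    (hψ2 : ψ2 = (1/2) * (1 - θ) * (1 - 6*θ))
    (hψ3 : ψ3 = (1/2) * θ * (1 - 2*θ)) :
    ω 0 = ((3 - 2*θ)/(2 - 2*θ)) ^ α ∧
    ω 1 = φ0 * ω 0 / ψ0 ∧
    ω 2 = ((φ0 - ψ1) * ω 1 + φ1 * ω 0) / (2 * ψ0) ∧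
    ∀ k : ℕ, 3 ≤ k →
      ω k = (1 / (k * ψ0)) *
        ((φ0 - ((k : ℝ) - 1) * ψ1) * ω (k - 1)
          + (φ1 - ((k : ℝ) - 2) * ψ2) * ω (k - 2)
          + (φ2 - ((k : ℝ) - 3) * ψ3) * ω (k - 3)) := by
  obtain ⟨hα0, hα1⟩ := hα
  have hθ1 : (0:ℝ) < 1 - θ := by linarith
  have hθ3 : (0:ℝ) < 3/2 - θ := by linarith
  have hψ0pos : (0:ℝ) < ψ0 := by rw [hψ0]; nlinarith
  have hψ0ne : ψ0 ≠ 0 := ne_of_gt hψ0pos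
  set f : ℂ → ℂ := fun ξ : ℂ =>
      ((1 : ℂ) - (θ : ℂ) + (θ : ℂ) * ξ) ^ (-(α : ℂ)) *
        (((3/2 : ℂ) - (θ : ℂ)) - ((2 : ℂ) - 2 * (θ : ℂ)) * ξ
          + ((1/2 : ℂ) - (θ : ℂ)) * ξ ^ 2) ^ (α : ℂ) with hf
  have hω' : ∀ k : ℕ, (ω k : ℂ) = iteratedDeriv k f 0 / (Nat.factorial k : ℂ) := hω
  -- the open set where both bases are in the slit plane
  set s : Set ℂ := ((fun ξ : ℂ => (1 : ℂ) - (θ : ℂ) + (θ : ℂ) * ξ) ⁻¹' Complex.slitPlane) ∩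
      ((fun ξ : ℂ => ((3/2 : ℂ) - (θ : ℂ)) - ((2 : ℂ) - 2 * (θ : ℂ)) * ξ
          + ((1/2 : ℂ) - (θ : ℂ)) * ξ ^ 2) ⁻¹' Complex.slitPlane) with hs
  have hs_open : IsOpen s := by
    apply IsOpen.inter
    · exact Complex.isOpen_slitPlane.preimage (by fun_prop)
    · exact Complex.isOpen_slitPlane.preimage (by fun_prop)
  have h0s : (0:ℂ) ∈ s := by
    constructor
    · show ((1 : ℂ) - (θ : ℂ) + (θ : ℂ) * 0) ∈ Complex.slitPlane
      have : (1 : ℂ) - (θ : ℂ) + (θ : ℂ) * 0 = ((1 - θ : ℝ) : ℂ) := by push_cast; ring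
      rw [this]
      exact Complex.ofReal_mem_slitPlane.mpr hθ1
    · show (((3/2 : ℂ) - (θ : ℂ)) - ((2 : ℂ) - 2 * (θ : ℂ)) * 0
          + ((1/2 : ℂ) - (θ : ℂ)) * 0 ^ 2) ∈ Complex.slitPlane
      have : ((3/2 : ℂ) - (θ : ℂ)) - ((2 : ℂ) - 2 * (θ : ℂ)) * 0
          + ((1/2 : ℂ) - (θ : ℂ)) * 0 ^ 2 = ((3/2 - θ : ℝ) : ℂ) := by push_cast; ring
      rw [this]
      exact Complex.ofReal_mem_slitPlane.mpr hθ3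
  -- derivatives of the two base functions
  have hU : ∀ x : ℂ, HasDerivAt (fun ξ : ℂ => (1 : ℂ) - (θ : ℂ) + (θ : ℂ) * ξ) ((θ:ℂ)) x := by
    intro x
    simpa using ((hasDerivAt_id' (𝕜 := ℂ) (x := x)).const_mul (θ:ℂ)).const_add ((1:ℂ) - (θ:ℂ))
  have hV : ∀ x : ℂ, HasDerivAt (fun ξ : ℂ => ((3/2 : ℂ) - (θ : ℂ)) - ((2 : ℂ) - 2 * (θ : ℂ)) * ξ
      + ((1/2 : ℂ) - (θ : ℂ)) * ξ ^ 2) (-((2:ℂ) - 2*(θ:ℂ)) + ((1/2:ℂ) - (θ:ℂ)) * (2*x)) x := by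
    intro x
    have h1 : HasDerivAt (fun ξ : ℂ => ((3/2 : ℂ) - (θ : ℂ)) - ((2 : ℂ) - 2 * (θ : ℂ)) * ξ)
        (-((2:ℂ) - 2*(θ:ℂ))) x := by
      simpa using (((hasDerivAt_id' (𝕜 := ℂ) (x := x)).const_mul ((2:ℂ) - 2*(θ:ℂ))).const_sub
        (((3/2:ℂ) - (θ:ℂ))))
    have h2 : HasDerivAt (fun ξ : ℂ => ((1/2:ℂ) - (θ:ℂ)) * ξ^2) (((1/2:ℂ) - (θ:ℂ)) * (2*x)) x := by
      simpa using (hasDerivAt_pow 2 x).const_mul ((1/2:ℂ) - (θ:ℂ))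
    exact h1.add h2
  have hF : ∀ x ∈ s, HasDerivAt f
      ((-(α:ℂ)) * ((1:ℂ) - (θ:ℂ) + (θ:ℂ)*x) ^ (-(α:ℂ) - 1) * (θ:ℂ) *
          (((3/2:ℂ) - (θ:ℂ)) - ((2:ℂ) - 2*(θ:ℂ))*x + ((1/2:ℂ) - (θ:ℂ))*x^2) ^ (α:ℂ)
        + ((1:ℂ) - (θ:ℂ) + (θ:ℂ)*x) ^ (-(α:ℂ)) *
          ((α:ℂ) * (((3/2:ℂ) - (θ:ℂ)) - ((2:ℂ) - 2*(θ:ℂ))*x + ((1/2:ℂ) - (θ:ℂ))*x^2) ^ ((α:ℂ) - 1)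
            * (-((2:ℂ) - 2*(θ:ℂ)) + ((1/2:ℂ) - (θ:ℂ)) * (2*x)))) x := by
    intro x hx
    exact ((hU x).cpow_const hx.1).mul ((hV x).cpow_const hx.2)
  have hDiff : DifferentiableOn ℂ f s := fun x hx =>
    ((hF x hx).differentiableAt).differentiableWithinAt
  have hAf : AnalyticOnNhd ℂ f s := hDiff.analyticOnNhd hs_open
  have hAd : AnalyticOnNhd ℂ (deriv f) s := hAf.deriv
  -- the ODE satisfied by f on s
  have hODE : ∀ x ∈ s,
      ((ψ0:ℂ) + (ψ1:ℂ)*x + (ψ2:ℂ)*x^2 + (ψ3:ℂ)*x^3) * deriv f x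
        = ((φ0:ℂ) + (φ1:ℂ)*x + (φ2:ℂ)*x^2) * f x := by
    intro x hx
    have hu0 : ((1:ℂ) - (θ:ℂ) + (θ:ℂ)*x) ≠ 0 := Complex.slitPlane_ne_zero hx.1
    have hv0 : (((3/2:ℂ) - (θ:ℂ)) - ((2:ℂ) - 2*(θ:ℂ))*x + ((1/2:ℂ) - (θ:ℂ))*x^2) ≠ 0 :=
      Complex.slitPlane_ne_zero hx.2
    rw [(hF x hx).deriv]
    have e1 : ((1:ℂ) - (θ:ℂ) + (θ:ℂ)*x) ^ (-(α:ℂ) - 1)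
        = ((1:ℂ) - (θ:ℂ) + (θ:ℂ)*x) ^ (-(α:ℂ)) / ((1:ℂ) - (θ:ℂ) + (θ:ℂ)*x) := by
      rw [Complex.cpow_sub _ _ hu0, Complex.cpow_one]
    have e2 : (((3/2:ℂ) - (θ:ℂ)) - ((2:ℂ) - 2*(θ:ℂ))*x + ((1/2:ℂ) - (θ:ℂ))*x^2) ^ ((α:ℂ) - 1)
        = (((3/2:ℂ) - (θ:ℂ)) - ((2:ℂ) - 2*(θ:ℂ))*x + ((1/2:ℂ) - (θ:ℂ))*x^2) ^ ((α:ℂ))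
          / (((3/2:ℂ) - (θ:ℂ)) - ((2:ℂ) - 2*(θ:ℂ))*x + ((1/2:ℂ) - (θ:ℂ))*x^2) := by
      rw [Complex.cpow_sub _ _ hv0, Complex.cpow_one]
    have hfx : f x = ((1:ℂ) - (θ:ℂ) + (θ:ℂ)*x) ^ (-(α:ℂ)) *
        (((3/2:ℂ) - (θ:ℂ)) - ((2:ℂ) - 2*(θ:ℂ))*x + ((1/2:ℂ) - (θ:ℂ))*x^2) ^ ((α:ℂ)) := by
      rw [hf]
    have hUinv : ((1:ℂ) - (θ:ℂ) + (θ:ℂ)*x) * ((1:ℂ) - (θ:ℂ) + (θ:ℂ)*x)⁻¹ = 1 :=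
      mul_inv_cancel₀ hu0
    have hVinv : (((3/2:ℂ) - (θ:ℂ)) - ((2:ℂ) - 2*(θ:ℂ))*x + ((1/2:ℂ) - (θ:ℂ))*x^2) *
        (((3/2:ℂ) - (θ:ℂ)) - ((2:ℂ) - 2*(θ:ℂ))*x + ((1/2:ℂ) - (θ:ℂ))*x^2)⁻¹ = 1 :=
      mul_inv_cancel₀ hv0
    have cψ0 : ((ψ0:ℝ):ℂ) = (1/2 : ℂ) * (3 - 2*(θ:ℂ)) * (1 - (θ:ℂ)) := by
      rw [hψ0]; push_cast; ring
    have cψ1 : ((ψ1:ℝ):ℂ) = (1/2 : ℂ) * (1 - 2*(θ:ℂ)) * (3*(θ:ℂ) - 4) := by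
      rw [hψ1]; push_cast; ring
    have cψ2 : ((ψ2:ℝ):ℂ) = (1/2 : ℂ) * (1 - (θ:ℂ)) * (1 - 6*(θ:ℂ)) := by
      rw [hψ2]; push_cast; ring
    have cψ3 : ((ψ3:ℝ):ℂ) = (1/2 : ℂ) * (θ:ℂ) * (1 - 2*(θ:ℂ)) := by
      rw [hψ3]; push_cast; ring
    have cφ0 : ((φ0:ℝ):ℂ) = -((α:ℂ)/2) * (2*(θ:ℂ)^2 - 5*(θ:ℂ) + 4) := by
      rw [hφ0]; push_cast; ring
    have cφ1 : ((φ1:ℝ):ℂ) = -(α:ℂ) * (2*(θ:ℂ) - 1) * (1 - (θ:ℂ)) := by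
      rw [hφ1]; push_cast; ring
    have cφ2 : ((φ2:ℝ):ℂ) = -((α:ℂ)*(θ:ℂ)/2) * (2*(θ:ℂ) - 1) := by
      rw [hφ2]; push_cast; ring
    rw [e1, e2, hfx, cψ0, cψ1, cψ2, cψ3, cφ0, cφ1, cφ2]
    linear_combination
      ((-(α:ℂ))*(θ:ℂ)*(((1:ℂ) - (θ:ℂ) + (θ:ℂ)*x) ^ (-(α:ℂ))) *
        ((((3/2:ℂ) - (θ:ℂ)) - ((2:ℂ) - 2*(θ:ℂ))*x + ((1/2:ℂ) - (θ:ℂ))*x^2) ^ ((α:ℂ))) *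
        (((3/2:ℂ) - (θ:ℂ)) - ((2:ℂ) - 2*(θ:ℂ))*x + ((1/2:ℂ) - (θ:ℂ))*x^2)) * hUinv +
      ((α:ℂ)*(((1:ℂ) - (θ:ℂ) + (θ:ℂ)*x) ^ (-(α:ℂ))) *
        ((((3/2:ℂ) - (θ:ℂ)) - ((2:ℂ) - 2*(θ:ℂ))*x + ((1/2:ℂ) - (θ:ℂ))*x^2) ^ ((α:ℂ))) *
        (-((2:ℂ) - 2*(θ:ℂ)) + ((1/2:ℂ) - (θ:ℂ)) * (2*x)) * ((1:ℂ) - (θ:ℂ) + (θ:ℂ)*x)) * hVinv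
  -- analyticity of auxiliary products
  have hA2 : AnalyticOnNhd ℂ (fun ξ : ℂ => ξ * deriv f ξ) s := analyticOnNhd_id.mul hAd
  have hA3 : AnalyticOnNhd ℂ (fun ξ : ℂ => ξ * (ξ * deriv f ξ)) s := analyticOnNhd_id.mul hA2
  have hA4 : AnalyticOnNhd ℂ (fun ξ : ℂ => ξ * (ξ * (ξ * deriv f ξ))) s := analyticOnNhd_id.mul hA3
  have hA6 : AnalyticOnNhd ℂ (fun ξ : ℂ => ξ * f ξ) s := analyticOnNhd_id.mul hAf
  have hA7 : AnalyticOnNhd ℂ (fun ξ : ℂ => ξ * (ξ * f ξ)) s := analyticOnNhd_id.mul hA6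
  -- evaluations of shifted iterated derivatives at 0
  have ht2 : ∀ k : ℕ, iteratedDeriv k (fun ξ : ℂ => ξ * deriv f ξ) 0
      = (k:ℂ) * iteratedDeriv (k-1) (deriv f) 0 := by
    intro k; rw [myIterShift hs_open hAd k 0 h0s]; simp
  have ht3 : ∀ k : ℕ, iteratedDeriv k (fun ξ : ℂ => ξ * (ξ * deriv f ξ)) 0
      = (k:ℂ) * (((k-1 : ℕ) : ℂ) * iteratedDeriv (k-1-1) (deriv f) 0) := by
    intro k; rw [myIterShift hs_open hA2 k 0 h0s, ht2 (k-1)]; simp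
  have ht4 : ∀ k : ℕ, iteratedDeriv k (fun ξ : ℂ => ξ * (ξ * (ξ * deriv f ξ))) 0
      = (k:ℂ) * (((k-1 : ℕ) : ℂ) * (((k-1-1 : ℕ) : ℂ) * iteratedDeriv (k-1-1-1) (deriv f) 0)) := by
    intro k; rw [myIterShift hs_open hA3 k 0 h0s, ht3 (k-1)]; simp
  have ht6 : ∀ k : ℕ, iteratedDeriv k (fun ξ : ℂ => ξ * f ξ) 0
      = (k:ℂ) * iteratedDeriv (k-1) f 0 := by
    intro k; rw [myIterShift hs_open hAf k 0 h0s]; simp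
  have ht7 : ∀ k : ℕ, iteratedDeriv k (fun ξ : ℂ => ξ * (ξ * f ξ)) 0
      = (k:ℂ) * (((k-1 : ℕ) : ℂ) * iteratedDeriv (k-1-1) f 0) := by
    intro k; rw [myIterShift hs_open hA6 k 0 h0s, ht6 (k-1)]; simp
  -- the combination vanishes near 0
  have hg0 : (fun ξ : ℂ => (ψ0:ℂ) * deriv f ξ + ((ψ1:ℂ) * (ξ * deriv f ξ)
      + ((ψ2:ℂ) * (ξ * (ξ * deriv f ξ)) + ((ψ3:ℂ) * (ξ * (ξ * (ξ * deriv f ξ)))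
      + ((-(φ0:ℂ)) * f ξ + ((-(φ1:ℂ)) * (ξ * f ξ)
      + (-(φ2:ℂ)) * (ξ * (ξ * f ξ))))))))
      =ᶠ[nhds (0:ℂ)] fun _ => 0 :=
    Filter.eventuallyEq_of_mem (hs_open.mem_nhds h0s) (fun x hx => by
      have h := hODE x hx; linear_combination h)
  -- analyticity of the scaled terms and the tails
  have hB1 : AnalyticOnNhd ℂ (fun ξ : ℂ => (ψ0:ℂ) * deriv f ξ) s := analyticOnNhd_const.mul hAd
  have hB2 : AnalyticOnNhd ℂ (fun ξ : ℂ => (ψ1:ℂ) * (ξ * deriv f ξ)) s := analyticOnNhd_const.mul hA2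
  have hB3 : AnalyticOnNhd ℂ (fun ξ : ℂ => (ψ2:ℂ) * (ξ * (ξ * deriv f ξ))) s := analyticOnNhd_const.mul hA3
  have hB4 : AnalyticOnNhd ℂ (fun ξ : ℂ => (ψ3:ℂ) * (ξ * (ξ * (ξ * deriv f ξ)))) s := analyticOnNhd_const.mul hA4
  have hB5 : AnalyticOnNhd ℂ (fun ξ : ℂ => (-(φ0:ℂ)) * f ξ) s := analyticOnNhd_const.mul hAf
  have hB6 : AnalyticOnNhd ℂ (fun ξ : ℂ => (-(φ1:ℂ)) * (ξ * f ξ)) s := analyticOnNhd_const.mul hA6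
  have hB7 : AnalyticOnNhd ℂ (fun ξ : ℂ => (-(φ2:ℂ)) * (ξ * (ξ * f ξ))) s := analyticOnNhd_const.mul hA7
  have hT6 : AnalyticOnNhd ℂ (fun ξ : ℂ => (-(φ1:ℂ)) * (ξ * f ξ)
      + (-(φ2:ℂ)) * (ξ * (ξ * f ξ))) s := hB6.add hB7
  have hT5 : AnalyticOnNhd ℂ (fun ξ : ℂ => (-(φ0:ℂ)) * f ξ + ((-(φ1:ℂ)) * (ξ * f ξ)
      + (-(φ2:ℂ)) * (ξ * (ξ * f ξ)))) s := hB5.add hT6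
  have hT4 : AnalyticOnNhd ℂ (fun ξ : ℂ => (ψ3:ℂ) * (ξ * (ξ * (ξ * deriv f ξ)))
      + ((-(φ0:ℂ)) * f ξ + ((-(φ1:ℂ)) * (ξ * f ξ)
      + (-(φ2:ℂ)) * (ξ * (ξ * f ξ))))) s := hB4.add hT5
  have hT3 : AnalyticOnNhd ℂ (fun ξ : ℂ => (ψ2:ℂ) * (ξ * (ξ * deriv f ξ))
      + ((ψ3:ℂ) * (ξ * (ξ * (ξ * deriv f ξ)))
      + ((-(φ0:ℂ)) * f ξ + ((-(φ1:ℂ)) * (ξ * f ξ)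
      + (-(φ2:ℂ)) * (ξ * (ξ * f ξ)))))) s := hB3.add hT4
  have hT2 : AnalyticOnNhd ℂ (fun ξ : ℂ => (ψ1:ℂ) * (ξ * deriv f ξ)
      + ((ψ2:ℂ) * (ξ * (ξ * deriv f ξ)) + ((ψ3:ℂ) * (ξ * (ξ * (ξ * deriv f ξ)))
      + ((-(φ0:ℂ)) * f ξ + ((-(φ1:ℂ)) * (ξ * f ξ)
      + (-(φ2:ℂ)) * (ξ * (ξ * f ξ))))))) s := hB2.add hT3
  -- index shifting on derivatives of f
  have hDsucc : ∀ j : ℕ, iteratedDeriv j (deriv f) 0 = iteratedDeriv (j+1) f 0 := by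
    intro j; rw [iteratedDeriv_succ']
  have hmini : ∀ m : ℕ, (m:ℂ) * iteratedDeriv (m-1) (deriv f) 0
      = (m:ℂ) * iteratedDeriv m f 0 := by
    intro m
    cases m with
    | zero => simp
    | succ m => rw [show m+1-1 = m from rfl, hDsucc m]
  -- the master recursion, at the level of iterated derivatives of f
  have hkey2 : ∀ k : ℕ,
      (ψ0:ℂ) * iteratedDeriv (k+1) f 0 + (ψ1:ℂ) * ((k:ℂ) * iteratedDeriv k f 0)
      + (ψ2:ℂ) * ((k:ℂ) * (((k-1:ℕ):ℂ) * iteratedDeriv (k-1) f 0))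
      + (ψ3:ℂ) * ((k:ℂ) * (((k-1:ℕ):ℂ) * (((k-1-1:ℕ):ℂ) * iteratedDeriv (k-1-1) f 0)))
      = (φ0:ℂ) * iteratedDeriv k f 0 + (φ1:ℂ) * ((k:ℂ) * iteratedDeriv (k-1) f 0)
      + (φ2:ℂ) * ((k:ℂ) * (((k-1:ℕ):ℂ) * iteratedDeriv (k-1-1) f 0)) := by
    intro k
    have h0 := myIterZero hg0 k
    rw [myIterAdd hs_open hB1 hT2 k 0 h0s,
        myIterAdd hs_open hB2 hT3 k 0 h0s,
        myIterAdd hs_open hB3 hT4 k 0 h0s,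
        myIterAdd hs_open hB4 hT5 k 0 h0s,
        myIterAdd hs_open hB5 hT6 k 0 h0s,
        myIterAdd hs_open hB6 hB7 k 0 h0s,
        myIterConstMul hs_open ((ψ0:ℂ)) hAd k 0 h0s,
        myIterConstMul hs_open ((ψ1:ℂ)) hA2 k 0 h0s,
        myIterConstMul hs_open ((ψ2:ℂ)) hA3 k 0 h0s,
        myIterConstMul hs_open ((ψ3:ℂ)) hA4 k 0 h0s,
        myIterConstMul hs_open (-(φ0:ℂ)) hAf k 0 h0s,
        myIterConstMul hs_open (-(φ1:ℂ)) hA6 k 0 h0s,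
        myIterConstMul hs_open (-(φ2:ℂ)) hA7 k 0 h0s,
        ht2 k, ht3 k, ht4 k, ht6 k, ht7 k,
        hmini k, hmini (k-1), hmini (k-1-1), hDsucc k] at h0
    linear_combination h0
  -- coefficients versus iterated derivatives
  have hc : ∀ j : ℕ, iteratedDeriv j f 0 = ((ω j : ℝ) : ℂ) * ((Nat.factorial j : ℕ) : ℂ) := by
    intro j
    have h := hω' j
    rw [eq_div_iff (Nat.cast_ne_zero.mpr (Nat.factorial_ne_zero j))] at h
    exact h.symm
  have hw0 : ω 0 = ((3 - 2*θ)/(2 - 2*θ)) ^ α := by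
    have hf0 : f 0 = ((( (1 - θ) ^ (-α) * (3/2 - θ) ^ α : ℝ )):ℂ) := by
      simp only [hf]
      have b1 : (1:ℂ) - (θ:ℂ) + (θ:ℂ) * 0 = ((1 - θ : ℝ):ℂ) := by push_cast; ring
      have b2 : ((3/2:ℂ) - (θ:ℂ)) - ((2:ℂ) - 2*(θ:ℂ)) * 0 + ((1/2:ℂ) - (θ:ℂ)) * 0^2
          = ((3/2 - θ : ℝ):ℂ) := by push_cast; ring
      rw [b1, b2, Complex.ofReal_mul, Complex.ofReal_cpow hθ1.le, Complex.ofReal_cpow hθ3.le,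
        Complex.ofReal_neg]
    have h0 : (ω 0 : ℂ) = (((1 - θ) ^ (-α) * (3/2 - θ) ^ α : ℝ) : ℂ) := by
      have := hω' 0
      rw [iteratedDeriv_zero] at this
      simpa [hf0] using this
    have hr : ω 0 = (1 - θ) ^ (-α) * (3/2 - θ) ^ α := by exact_mod_cast h0
    rw [hr, show (3 - 2*θ)/(2 - 2*θ) = (3/2 - θ)/(1 - θ) by
      rw [div_eq_div_iff (by linarith) (by linarith)]; ring]
    rw [Real.div_rpow hθ3.le hθ1.le, Real.rpow_neg hθ1.le, div_eq_mul_inv]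
    ring
  refine ⟨hw0, ?_, ?_, ?_⟩
  · -- ω 1
    have h := hkey2 0
    simp only [Nat.cast_zero, zero_mul, mul_zero, add_zero, Nat.zero_sub] at h
    rw [hc 1, hc 0] at h
    simp only [Nat.factorial] at h
    norm_num at h
    have hra : ψ0 * ω 1 = φ0 * ω 0 := by exact_mod_cast h
    rw [eq_div_iff hψ0ne]
    linear_combination hra
  · -- ω 2
    have h := hkey2 1
    simp only [show (1:ℕ)-1 = 0 from rfl, show (1:ℕ)-1-1 = 0 from rfl, Nat.cast_zero,
      Nat.cast_one, zero_mul, mul_zero, add_zero, one_mul] at h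
    rw [hc 2, hc 1, hc 0] at h
    simp only [Nat.factorial] at h
    norm_num at h
    have hrb : ψ0 * (ω 2 * 2) + ψ1 * ω 1 = φ0 * ω 1 + φ1 * ω 0 := by exact_mod_cast h
    rw [eq_div_iff (by positivity : (2:ℝ) * ψ0 ≠ 0)]
    linear_combination hrb
  · -- general recursion
    intro k hk
    obtain ⟨n, rfl⟩ : ∃ n, k = n + 3 := ⟨k - 3, by omega⟩
    have h := hkey2 (n+2)
    simp only [show n+2+1 = n+3 from rfl, show n+2-1 = n+1 from rfl,
      show n+2-1-1 = n from rfl, show n+1-1 = n from rfl] at h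
    rw [hc (n+3), hc (n+2), hc (n+1), hc n] at h
    have hrc : ψ0 * (ω (n+3) * ((n+3).factorial : ℝ))
        + ψ1 * (((n:ℝ)+2) * (ω (n+2) * ((n+2).factorial : ℝ)))
        + ψ2 * (((n:ℝ)+2) * (((n:ℝ)+1) * (ω (n+1) * ((n+1).factorial : ℝ))))
        + ψ3 * (((n:ℝ)+2) * (((n:ℝ)+1) * ((n:ℝ) * (ω n * (n.factorial : ℝ)))))
        = φ0 * (ω (n+2) * ((n+2).factorial : ℝ))
        + φ1 * (((n:ℝ)+2) * (ω (n+1) * ((n+1).factorial : ℝ)))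
        + φ2 * (((n:ℝ)+2) * (((n:ℝ)+1) * (ω n * (n.factorial : ℝ)))) := by
      exact_mod_cast h
    have e3 : ((n+3).factorial : ℝ) = ((n:ℝ)+3) * (((n:ℝ)+2) * (((n:ℝ)+1) * (n.factorial : ℝ))) := by
      rw [show n+3 = (n+2)+1 from rfl, Nat.factorial_succ, show n+2 = (n+1)+1 from rfl,
        Nat.factorial_succ, Nat.factorial_succ]
      push_cast; ring
    have e2' : ((n+2).factorial : ℝ) = ((n:ℝ)+2) * (((n:ℝ)+1) * (n.factorial : ℝ)) := by
      rw [show n+2 = (n+1)+1 from rfl, Nat.factorial_succ, Nat.factorial_succ]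
      push_cast; ring
    have e1' : ((n+1).factorial : ℝ) = ((n:ℝ)+1) * (n.factorial : ℝ) := by
      rw [Nat.factorial_succ]; push_cast; ring
    rw [e3, e2', e1'] at hrc
    have hfacne : (n.factorial : ℝ) ≠ 0 := Nat.cast_ne_zero.mpr (Nat.factorial_ne_zero n)
    have hDne : ((n:ℝ)+2) * (((n:ℝ)+1) * (n.factorial : ℝ)) ≠ 0 := by positivity
    have hR' : ψ0 * (((n:ℝ)+3) * ω (n+3)) + ψ1 * (((n:ℝ)+2) * ω (n+2))
        + ψ2 * (((n:ℝ)+1) * ω (n+1)) + ψ3 * ((n:ℝ) * ω n)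
        = φ0 * ω (n+2) + φ1 * ω (n+1) + φ2 * ω n := by
      apply mul_left_cancel₀ hDne
      linear_combination hrc
    simp only [show n+3-1 = n+2 from rfl, show n+3-2 = n+1 from rfl, show n+3-3 = n from rfl]
    push_cast
    have hn3 : ((n:ℝ)+3) * ψ0 ≠ 0 := by positivity
    field_simp
    linear_combination (((n:ℝ)+3)*(n:ℝ)*ψ0*0 + 1) * hR'
end

section
/- Let α ∈ (0,1] and θ ∈ [−1/(2α), 1], and let ω_k (k ≥ 0) be the Maclaurin coefficients of the FBN-θ generating function. Then ω₀ = 2^{−α}(1+αθ)(3−2θ)^α, ω₁ = φ₀ω₀/ψ₀, ω₂ = [(φ₀−ψ₁)ω₁ + φ₁ω₀]/(2ψ₀), and for every k ≥ 3, ω_k = (1/(k·ψ₀)) · Σ_{j=1}^{3} [φ_{j−1} − (k−j)ψ_j] ω_{k−j}, where φ₀ = 2α(θ−1)(αθ+1) + αθ(θ−3/2), φ₁ = −α(2θ²−3αθ+4αθ²−1), φ₂ = −αθ(1/2−θ+α−2αθ), ψ₀ = (1/2)(3−2θ)(1+αθ), ψ₁ = −(αθ/2)(3−2θ) − 2(1−θ)(αθ+1),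 ψ₂ = −(1/2)(αθ+1)(2θ−1) − 2αθ(θ−1), ψ₃ = −(1/2)αθ(1−2θ). -/
open Complex

private lemma iterA {g : ℂ → ℂ} {s : Set ℂ} (hg : AnalyticOnNhd ℂ g s) (n : ℕ) :
    AnalyticOnNhd ℂ (iteratedDeriv n g) s := by
  rw [iteratedDeriv_eq_iterate]; exact hg.iterated_deriv n

private lemma iter_add {f g : ℂ → ℂ} {s : Set ℂ} (hs : IsOpen s)
    (hf : AnalyticOnNhd ℂ f s) (hg : AnalyticOnNhd ℂ g s) (n : ℕ) :
    ∀ x ∈ s, iteratedDeriv n (fun y => f y + g y) x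
      = iteratedDeriv n f x + iteratedDeriv n g x := by
  induction n with
  | zero => intro x hx; simp
  | succ n ih =>
    intro x hx
    rw [iteratedDeriv_succ, iteratedDeriv_succ, iteratedDeriv_succ]
    have hev : iteratedDeriv n (fun y => f y + g y)
        =ᶠ[nhds x] fun y => iteratedDeriv n f y + iteratedDeriv n g y := by
      filter_upwards [hs.mem_nhds hx] with y hy using ih y hy
    rw [hev.deriv_eq]
    exact deriv_add ((iterA hf n x hx).differentiableAt)
      ((iterA hg n x hx).differentiableAt)

private lemma iter_cmul {g : ℂ → ℂ} {s : Set ℂ} (hs : IsOpen s)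
    (hg : AnalyticOnNhd ℂ g s) (c : ℂ) (n : ℕ) :
    ∀ x ∈ s, iteratedDeriv n (fun y => c * g y) x = c * iteratedDeriv n g x := by
  induction n with
  | zero => intro x hx; simp
  | succ n ih =>
    intro x hx
    rw [iteratedDeriv_succ, iteratedDeriv_succ]
    have hev : iteratedDeriv n (fun y => c * g y)
        =ᶠ[nhds x] fun y => c * iteratedDeriv n g y := by
      filter_upwards [hs.mem_nhds hx] with y hy using ih y hy
    rw [hev.deriv_eq, deriv_const_mul _ ((iterA hg n x hx).differentiableAt)]

private lemma iter_idmul {g : ℂ → ℂ} {s : Set ℂ} (hs : IsOpen s)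
    (hg : AnalyticOnNhd ℂ g s) (n : ℕ) :
    ∀ x ∈ s, iteratedDeriv n (fun y => y * g y) x
      = x * iteratedDeriv n g x + (n : ℂ) * iteratedDeriv (n - 1) g x := by
  induction n with
  | zero => intro x hx; simp
  | succ n ih =>
    intro x hx
    rw [iteratedDeriv_succ]
    have hev : iteratedDeriv n (fun y => y * g y)
        =ᶠ[nhds x] fun y => y * iteratedDeriv n g y + (n : ℂ) * iteratedDeriv (n - 1) g y := by
      filter_upwards [hs.mem_nhds hx] with y hy using ih y hy
    rw [hev.deriv_eq]
    have h1 : DifferentiableAt ℂ (iteratedDeriv n g) x :=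
      (iterA hg n x hx).differentiableAt
    have h2 : DifferentiableAt ℂ (iteratedDeriv (n - 1) g) x :=
      (iterA hg (n - 1) x hx).differentiableAt
    rw [deriv_fun_add (differentiableAt_fun_id.fun_mul h1) (h2.const_mul _),
      deriv_fun_mul differentiableAt_fun_id h1, deriv_const_mul _ h2, deriv_id'',
      ← iteratedDeriv_succ, ← iteratedDeriv_succ]
    have hn : (n : ℂ) * iteratedDeriv (n - 1 + 1) g x = (n : ℂ) * iteratedDeriv n g x := by
      cases n <;> simp
    rw [hn]
    push_cast
    ring

private lemma iter_cubic {g : ℂ → ℂ} {s : Set ℂ} (hs : IsOpen s) (h0 : (0:ℂ) ∈ s)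
    (hg : AnalyticOnNhd ℂ g s) (c0 c1 c2 c3 : ℂ) (n : ℕ) :
    iteratedDeriv n (fun y => (c0 + c1 * y + c2 * y ^ 2 + c3 * y ^ 3) * g y) 0
      = c0 * iteratedDeriv n g 0
        + c1 * (n : ℂ) * iteratedDeriv (n - 1) g 0
        + c2 * ((n : ℂ) * ((n - 1 : ℕ) : ℂ)) * iteratedDeriv (n - 2) g 0
        + c3 * ((n : ℂ) * ((n - 1 : ℕ) : ℂ) * ((n - 2 : ℕ) : ℂ)) * iteratedDeriv (n - 3) g 0 := by
  have hg1 : AnalyticOnNhd ℂ (fun y => y * g y) s := analyticOnNhd_id.mul hg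
  have hg2 : AnalyticOnNhd ℂ (fun y => y * (y * g y)) s := analyticOnNhd_id.mul hg1
  have hg3 : AnalyticOnNhd ℂ (fun y => y * (y * (y * g y))) s := analyticOnNhd_id.mul hg2
  have e1 : iteratedDeriv n (fun y => y * g y) 0
      = (n : ℂ) * iteratedDeriv (n - 1) g 0 := by
    rw [iter_idmul hs hg n 0 h0]; ring
  have e2 : iteratedDeriv n (fun y => y * (y * g y)) 0
      = (n : ℂ) * ((n - 1 : ℕ) : ℂ) * iteratedDeriv (n - 2) g 0 := by
    rw [iter_idmul hs hg1 n 0 h0, iter_idmul hs hg (n - 1) 0 h0]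
    have : n - 1 - 1 = n - 2 := by omega
    rw [this]; ring
  have e3 : iteratedDeriv n (fun y => y * (y * (y * g y))) 0
      = (n : ℂ) * ((n - 1 : ℕ) : ℂ) * ((n - 2 : ℕ) : ℂ) * iteratedDeriv (n - 3) g 0 := by
    rw [iter_idmul hs hg2 n 0 h0, iter_idmul hs hg1 (n - 1) 0 h0,
      iter_idmul hs hg (n - 1 - 1) 0 h0]
    have h12 : n - 1 - 1 = n - 2 := by omega
    have h13 : n - 1 - 1 - 1 = n - 3 := by omega
    rw [h12]
    rw [show n - 1 - 1 - 1 = n - 3 from h13] at *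
    have : n - 2 - 1 = n - 3 := by omega
    rw [this]; ring
  have hfun : (fun y => (c0 + c1 * y + c2 * y ^ 2 + c3 * y ^ 3) * g y)
      = fun y => c0 * g y + (c1 * (y * g y)
        + (c2 * (y * (y * g y)) + c3 * (y * (y * (y * g y))))) := by
    funext y; ring
  rw [hfun]
  have a1 : AnalyticOnNhd ℂ (fun y => c0 * g y) s := analyticOnNhd_const.mul hg
  have a2 : AnalyticOnNhd ℂ (fun y => c1 * (y * g y)) s := analyticOnNhd_const.mul hg1
  have a3 : AnalyticOnNhd ℂ (fun y => c2 * (y * (y * g y))) s := analyticOnNhd_const.mul hg2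
  have a4 : AnalyticOnNhd ℂ (fun y => c3 * (y * (y * (y * g y)))) s :=
    analyticOnNhd_const.mul hg3
  have a34 : AnalyticOnNhd ℂ
      (fun y => c2 * (y * (y * g y)) + c3 * (y * (y * (y * g y)))) s := a3.add a4
  have a234 : AnalyticOnNhd ℂ
      (fun y => c1 * (y * g y)
        + (c2 * (y * (y * g y)) + c3 * (y * (y * (y * g y))))) s := a2.add a34
  rw [iter_add hs a1 a234 n 0 h0, iter_add hs a2 a34 n 0 h0, iter_add hs a3 a4 n 0 h0,
    iter_cmul hs hg c0 n 0 h0, iter_cmul hs hg1 c1 n 0 h0, iter_cmul hs hg2 c2 n 0 h0,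
    iter_cmul hs hg3 c3 n 0 h0, e1, e2, e3]
  ring


/-- recursive formula for the Maclaurin coefficients (convolution
weights) of the FBN-θ generating function
`ω^{(α)}(ξ) = (1+αθ−αθξ)·[(3/2−θ) − (2−2θ)ξ + (1/2−θ)ξ²]^{α}`. -/
theorem fbn_theta_weights_recursion (α θ : ℝ) (hα : α ∈ Set.Ioc (0:ℝ) 1)
    (hθ : θ ∈ Set.Icc (-(1/(2*α))) 1)
    (ω : ℕ → ℝ)
    (hω : ∀ k : ℕ, (ω k : ℂ) =
      iteratedDeriv k
        (fun ξ : ℂ =>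
          ((1 : ℂ) + (α : ℂ) * (θ : ℂ) - (α : ℂ) * (θ : ℂ) * ξ) *
            (((3/2 : ℂ) - (θ : ℂ)) - ((2 : ℂ) - 2 * (θ : ℂ)) * ξ
              + ((1/2 : ℂ) - (θ : ℂ)) * ξ ^ 2) ^ (α : ℂ)) 0
        / (Nat.factorial k : ℂ))
    (φ0 φ1 φ2 ψ0 ψ1 ψ2 ψ3 : ℝ)
    (hφ0 : φ0 = 2*α*(θ - 1)*(α*θ + 1) + α*θ*(θ - 3/2))
    (hφ1 : φ1 = -α * (2*θ^2 - 3*α*θ + 4*α*θ^2 - 1))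
    (hφ2 : φ2 = -(α*θ) * (1/2 - θ + α - 2*α*θ))
    (hψ0 : ψ0 = (1/2) * (3 - 2*θ) * (1 + α*θ))
    (hψ1 : ψ1 = -(α*θ/2) * (3 - 2*θ) - 2*(1 - θ)*(α*θ + 1))
    (hψ2 : ψ2 = -(1/2) * (α*θ + 1) * (2*θ - 1) - 2*α*θ*(θ - 1))
    (hψ3 : ψ3 = -(1/2) * α * θ * (1 - 2*θ)) :
    ω 0 = 2 ^ (-α) * (1 + α*θ) * (3 - 2*θ) ^ α ∧
    ω 1 = φ0 * ω 0 / ψ0 ∧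
    ω 2 = ((φ0 - ψ1) * ω 1 + φ1 * ω 0) / (2 * ψ0) ∧
    ∀ k : ℕ, 3 ≤ k →
      ω k = (1 / (k * ψ0)) *
        ((φ0 - ((k : ℝ) - 1) * ψ1) * ω (k - 1)
          + (φ1 - ((k : ℝ) - 2) * ψ2) * ω (k - 2)
          + (φ2 - ((k : ℝ) - 3) * ψ3) * ω (k - 3)) := by
  obtain ⟨hα0, hα1⟩ := hα
  obtain ⟨hθl, hθu⟩ := hθ
  have hα0' : α ≠ 0 := ne_of_gt hα0
  have hαθ : -(1/2) ≤ α * θ := by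
    have h1 := mul_le_mul_of_nonneg_left hθl hα0.le
    have h2 : α * (1/(2*α)) = 1/2 := by field_simp
    nlinarith
  have hψ0pos : 0 < ψ0 := by rw [hψ0]; nlinarith
  set F : ℂ → ℂ := (fun ξ : ℂ =>
          ((1 : ℂ) + (α : ℂ) * (θ : ℂ) - (α : ℂ) * (θ : ℂ) * ξ) *
            (((3/2 : ℂ) - (θ : ℂ)) - ((2 : ℂ) - 2 * (θ : ℂ)) * ξ
              + ((1/2 : ℂ) - (θ : ℂ)) * ξ ^ 2) ^ (α : ℂ)) with hF
  set Q : ℂ → ℂ := fun ξ : ℂ => ((3/2 : ℂ) - (θ : ℂ)) - ((2 : ℂ) - 2 * (θ : ℂ)) * ξ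
              + ((1/2 : ℂ) - (θ : ℂ)) * ξ ^ 2 with hQd
  set P : ℂ → ℂ := fun ξ : ℂ =>
          (1 : ℂ) + (α : ℂ) * (θ : ℂ) - (α : ℂ) * (θ : ℂ) * ξ with hPd
  have hFPQ : F = fun ξ => P ξ * Q ξ ^ (α : ℂ) := rfl
  set s : Set ℂ := {ξ : ℂ | 0 < (Q ξ).re} with hsd
  have hsopen : IsOpen s := by
    have hc : Continuous fun ξ => (Q ξ).re := by rw [hQd]; fun_prop
    exact isOpen_lt continuous_const hc
  have h0s : (0:ℂ) ∈ s := by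
    have : Q 0 = ((3/2 : ℂ) - (θ : ℂ)) := by rw [hQd]; ring
    simp only [hsd, Set.mem_setOf_eq, this]
    simp only [Complex.sub_re, Complex.ofReal_re]
    norm_num
    linarith
  have hQslit : ∀ ξ ∈ s, Q ξ ∈ Complex.slitPlane := fun ξ hx => Or.inl hx
  have hQne : ∀ ξ ∈ s, Q ξ ≠ 0 := fun ξ hx => Complex.slitPlane_ne_zero (hQslit ξ hx)
  have hQder : ∀ ξ : ℂ, HasDerivAt Q
      (-((2:ℂ) - 2*(θ:ℂ)) + ((1/2:ℂ) - (θ:ℂ)) * (2*ξ)) ξ := by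
    intro ξ
    rw [hQd]
    have h1 : HasDerivAt (fun ξ:ℂ => ((2:ℂ) - 2*(θ:ℂ)) * ξ) ((2:ℂ) - 2*(θ:ℂ)) ξ := by
      simpa using (hasDerivAt_id ξ).const_mul ((2:ℂ) - 2*(θ:ℂ))
    have h2 : HasDerivAt (fun ξ:ℂ => ((1/2:ℂ) - (θ:ℂ)) * ξ^2)
        (((1/2:ℂ) - (θ:ℂ)) * (2*ξ)) ξ := by
      have := (hasDerivAt_pow 2 ξ).const_mul ((1/2:ℂ) - (θ:ℂ))
      simpa [mul_comm, mul_assoc] using this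
    simpa using (h1.const_sub ((3/2:ℂ) - (θ:ℂ))).fun_add h2
  have hPder : ∀ ξ : ℂ, HasDerivAt P (-((α:ℂ)*(θ:ℂ))) ξ := by
    intro ξ
    rw [hPd]
    simpa using ((hasDerivAt_id ξ).const_mul ((α:ℂ)*(θ:ℂ))).const_sub
      ((1:ℂ) + (α:ℂ)*(θ:ℂ))
  have hFder : ∀ ξ ∈ s, HasDerivAt F
      (-((α:ℂ)*(θ:ℂ)) * Q ξ ^ (α:ℂ)
        + P ξ * ((α:ℂ) * Q ξ ^ ((α:ℂ) - 1)
            * (-((2:ℂ) - 2*(θ:ℂ)) + ((1/2:ℂ) - (θ:ℂ)) * (2*ξ)))) ξ := by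
    intro ξ hx
    exact (hPder ξ).mul ((hQder ξ).cpow_const (hQslit ξ hx))
  have hFan : AnalyticOnNhd ℂ F s :=
    DifferentiableOn.analyticOnNhd
      (fun ξ hx => ((hFder ξ hx).differentiableAt).differentiableWithinAt) hsopen
  have hgan : AnalyticOnNhd ℂ (deriv F) s := hFan.deriv_of_isOpen hsopen
  have hODE : Set.EqOn
      (fun ξ => ((ψ0:ℂ) + (ψ1:ℂ) * ξ + (ψ2:ℂ) * ξ ^ 2 + (ψ3:ℂ) * ξ ^ 3) * deriv F ξ)
      (fun ξ => ((φ0:ℂ) + (φ1:ℂ) * ξ + (φ2:ℂ) * ξ ^ 2 + (0:ℂ) * ξ ^ 3) * F ξ) s := by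
    intro ξ hx
    have hd : deriv F ξ = -((α:ℂ)*(θ:ℂ)) * Q ξ ^ (α:ℂ)
        + P ξ * ((α:ℂ) * Q ξ ^ ((α:ℂ) - 1)
            * (-((2:ℂ) - 2*(θ:ℂ)) + ((1/2:ℂ) - (θ:ℂ)) * (2*ξ))) := (hFder ξ hx).deriv
    have hpow : Q ξ ^ (α:ℂ) = Q ξ ^ ((α:ℂ) - 1) * Q ξ := by
      conv_lhs => rw [show (α:ℂ) = ((α:ℂ) - 1) + 1 by ring]
      rw [cpow_add _ _ (hQne ξ hx), cpow_one]
    simp only []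
    rw [hd, hFPQ]
    simp only []
    rw [hpow]
    rw [hψ0, hψ1, hψ2, hψ3, hφ0, hφ1, hφ2, hPd, hQd]
    simp only []
    push_cast
    ring
  have hIter : ∀ n : ℕ,
      iteratedDeriv n
        (fun ξ => ((ψ0:ℂ) + (ψ1:ℂ) * ξ + (ψ2:ℂ) * ξ ^ 2 + (ψ3:ℂ) * ξ ^ 3) * deriv F ξ) 0
      = iteratedDeriv n
        (fun ξ => ((φ0:ℂ) + (φ1:ℂ) * ξ + (φ2:ℂ) * ξ ^ 2 + (0:ℂ) * ξ ^ 3) * F ξ) 0 :=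
    fun n => hODE.iteratedDeriv_of_isOpen hsopen n h0s
  have hDg : ∀ m : ℕ, iteratedDeriv m (deriv F) 0 = iteratedDeriv (m+1) F 0 :=
    fun m => (congrFun (iteratedDeriv_succ' (n := m) (f := F)) 0).symm
  have hDfact : ∀ j : ℕ, iteratedDeriv j F 0 = (j.factorial : ℂ) * (ω j : ℝ) := by
    intro j
    have hfac : (j.factorial : ℂ) ≠ 0 := Nat.cast_ne_zero.mpr (Nat.factorial_ne_zero j)
    have h := hω j
    rw [eq_div_iff hfac] at h
    rw [← h]; ring
  have key : ∀ n : ℕ,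
      (ψ0:ℂ) * iteratedDeriv (n+1) F 0
        + (ψ1:ℂ) * (n : ℂ) * iteratedDeriv (n-1+1) F 0
        + (ψ2:ℂ) * ((n : ℂ) * ((n-1 : ℕ) : ℂ)) * iteratedDeriv (n-2+1) F 0
        + (ψ3:ℂ) * ((n : ℂ) * ((n-1 : ℕ) : ℂ) * ((n-2 : ℕ) : ℂ)) * iteratedDeriv (n-3+1) F 0
      = (φ0:ℂ) * iteratedDeriv n F 0
        + (φ1:ℂ) * (n : ℂ) * iteratedDeriv (n-1) F 0
        + (φ2:ℂ) * ((n : ℂ) * ((n-1 : ℕ) : ℂ)) * iteratedDeriv (n-2) F 0 := by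
    intro n
    have hL := iter_cubic hsopen h0s hgan (ψ0:ℂ) (ψ1:ℂ) (ψ2:ℂ) (ψ3:ℂ) n
    have hR := iter_cubic hsopen h0s hFan (φ0:ℂ) (φ1:ℂ) (φ2:ℂ) (0:ℂ) n
    have h := (hL.symm.trans ((hIter n).trans hR))
    simp only [hDg] at h
    linear_combination h
  refine ⟨?_, ?_, ?_, ?_⟩
  · -- ω 0
    have hF0 : iteratedDeriv 0 F 0
        = ((1 + α*θ : ℝ) : ℂ) * ((((3/2 - θ)^α : ℝ)) : ℂ) := by
      rw [iteratedDeriv_zero]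
      have hq0 : Q 0 = ((3/2 - θ : ℝ) : ℂ) := by rw [hQd]; push_cast; ring
      have hp0 : P 0 = ((1 + α*θ : ℝ) : ℂ) := by rw [hPd]; push_cast; ring
      have hFv : F 0 = P 0 * Q 0 ^ (α:ℂ) := rfl
      rw [hFv, hq0, hp0, ← Complex.ofReal_cpow (by linarith) α]
    have h := hω 0
    rw [hF0] at h
    norm_num at h
    have hreal : (2:ℝ) ^ (-α) * (1 + α*θ) * (3 - 2*θ) ^ α = (1 + α*θ) * (3/2 - θ)^α := by
      have h2 : (0:ℝ) < (2:ℝ)^α := Real.rpow_pos_of_pos two_pos α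
      rw [show (3/2 - θ : ℝ) = (3 - 2*θ)/2 by ring,
        Real.div_rpow (by linarith) (by norm_num), Real.rpow_neg (by norm_num)]
      field_simp
    rw [hreal]
    exact_mod_cast h
  · -- ω 1
    have k0 := key 0
    simp only [hDfact] at k0
    norm_num [Nat.factorial] at k0
    have r2 : ψ0 * ω 1 = φ0 * ω 0 := by exact_mod_cast k0
    field_simp
    linear_combination r2
  · -- ω 2
    have k1 := key 1
    simp only [hDfact] at k1
    norm_num [Nat.factorial] at k1
    have r3 : ψ0 * (2 * ω 2) + ψ1 * ω 1 = φ0 * ω 1 + φ1 * ω 0 := by exact_mod_cast k1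
    field_simp
    linear_combination r3
  · -- k ≥ 3
    intro k hk
    obtain ⟨m, rfl⟩ : ∃ m, k = m + 3 := ⟨k - 3, by omega⟩
    have km := key (m + 2)
    rw [show m + 2 - 1 = m + 1 from by omega, show m + 2 - 2 = m from by omega,
      show m + 2 - 3 = m - 1 from by omega, show m + 2 + 1 = m + 3 from by omega,
      show m + 1 + 1 = m + 2 from by omega] at km
    have hsw : ((m:ℕ) : ℂ) * iteratedDeriv (m - 1 + 1) F 0
        = ((m:ℕ) : ℂ) * iteratedDeriv m F 0 := by
      rcases m with _ | l
      · norm_num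
      · norm_num
    have km2 : (ψ0:ℂ) * iteratedDeriv (m+3) F 0
        + (ψ1:ℂ) * ((m+2 : ℕ) : ℂ) * iteratedDeriv (m+2) F 0
        + (ψ2:ℂ) * (((m+2 : ℕ) : ℂ) * ((m+1 : ℕ) : ℂ)) * iteratedDeriv (m+1) F 0
        + (ψ3:ℂ) * (((m+2 : ℕ) : ℂ) * ((m+1 : ℕ) : ℂ) * ((m : ℕ) : ℂ))
            * iteratedDeriv m F 0
        = (φ0:ℂ) * iteratedDeriv (m+2) F 0
        + (φ1:ℂ) * ((m+2 : ℕ) : ℂ) * iteratedDeriv (m+1) F 0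
        + (φ2:ℂ) * (((m+2 : ℕ) : ℂ) * ((m+1 : ℕ) : ℂ)) * iteratedDeriv m F 0 := by
      linear_combination km - (ψ3:ℂ) * (((m+2 : ℕ) : ℂ) * ((m+1 : ℕ) : ℂ)) * hsw
    simp only [hDfact] at km2
    have f1 : ((m+1).factorial : ℂ) = ((m+1 : ℕ) : ℂ) * (m.factorial : ℂ) := by
      rw [Nat.factorial_succ]; push_cast; ring
    have f2 : ((m+2).factorial : ℂ) = ((m+2 : ℕ) : ℂ) * ((m+1).factorial : ℂ) := by
      rw [show m + 2 = (m+1)+1 from rfl, Nat.factorial_succ]; push_cast; ring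
    have f3 : ((m+3).factorial : ℂ) = ((m+3 : ℕ) : ℂ) * ((m+2).factorial : ℂ) := by
      rw [show m + 3 = (m+2)+1 from rfl, Nat.factorial_succ]; push_cast; ring
    rw [f3, f2, f1] at km2
    have hc : (((m+2) * (m+1) * m.factorial : ℕ) : ℂ) ≠ 0 :=
      Nat.cast_ne_zero.mpr (by positivity)
    have EcC : (ψ0:ℂ) * (((m:ℂ)+3) * ((ω (m+3) : ℝ) : ℂ))
        + (ψ1:ℂ) * (((m:ℂ)+2) * ((ω (m+2) : ℝ) : ℂ))
        + (ψ2:ℂ) * (((m:ℂ)+1) * ((ω (m+1) : ℝ) : ℂ))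
        + (ψ3:ℂ) * ((m:ℂ) * ((ω m : ℝ) : ℂ))
        = (φ0:ℂ) * ((ω (m+2) : ℝ) : ℂ) + (φ1:ℂ) * ((ω (m+1) : ℝ) : ℂ)
          + (φ2:ℂ) * ((ω m : ℝ) : ℂ) := by
      apply mul_left_cancel₀ hc
      push_cast
      push_cast at km2
      linear_combination km2
    have EcR : ψ0 * (((m:ℝ)+3) * ω (m+3)) + ψ1 * (((m:ℝ)+2) * ω (m+2))
        + ψ2 * (((m:ℝ)+1) * ω (m+1)) + ψ3 * ((m:ℝ) * ω m)
        = φ0 * ω (m+2) + φ1 * ω (m+1) + φ2 * ω m := by exact_mod_cast EcC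
    rw [show m + 3 - 1 = m + 2 from by omega, show m + 3 - 2 = m + 1 from by omega,
      show m + 3 - 3 = m from by omega]
    have h3 : ((m:ℝ)+3) ≠ 0 := by positivity
    push_cast
    field_simp
    linear_combination EcR
end

section
/- Let ω₀ = 3/2, ω₁ = −2, ω₂ = 1/2 and ω_k = 0 for k ≥ 3 (the BDF2 weights, i.e., the coefficients of 3/2 − 2ξ + (1/2)ξ²). Then for every integer n ≥ 1 and every real vector (v⁰, …, v^{n−1}) ∈ ℝⁿ, one has Σ_{j=0}^{n−1} v^j Σ_{k=0}^{j} ω_{j−k} v^k ≥ (1/4)(v^{n−1})²; equivalently, with the convention v^{−1} = v^{−2} = 0, Σ_{j=0}^{n−1} v^j ((3/2)v^j − 2v^{j−1} + (1/2)v^{j−2}) ≥ (1/4)(v^{n−1})². -/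
open Finset

lemma bdf2_inner_eq (v : ℕ → ℝ) (j : ℕ) :
    ∑ k ∈ Finset.range (j + 1),
      (if j - k = 0 then (3/2 : ℝ) else if j - k = 1 then -2 else if j - k = 2 then 1/2 else 0) * v k
    = (3/2) * v j - 2 * (if 1 ≤ j then v (j - 1) else 0)
        + (1/2) * (if 2 ≤ j then v (j - 2) else 0) := by
  match j with
  | 0 => simp
  | 1 => simp [Finset.sum_range_succ]; ring
  | (m+2) =>
    rw [Finset.sum_range_succ, Finset.sum_range_succ, Finset.sum_range_succ]
    have h0 : ∑ k ∈ Finset.range m,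
        (if m + 2 - k = 0 then (3/2 : ℝ) else if m + 2 - k = 1 then -2
          else if m + 2 - k = 2 then 1/2 else 0) * v k = 0 := by
      apply Finset.sum_eq_zero
      intro k hk
      have hk' := Finset.mem_range.mp hk
      have h1 : ¬ (m + 2 - k = 0) := by omega
      have h2 : ¬ (m + 2 - k = 1) := by omega
      have h3 : ¬ (m + 2 - k = 2) := by omega
      simp [h1, h2, h3]
    rw [h0]
    have e1 : m + 2 - (m + 1) = 1 := by omega
    have e2 : m + 2 - m = 2 := by omega
    simp [e1, e2]
    ring

lemma bdf2_key (v : ℕ → ℝ) : ∀ n : ℕ, 1 ≤ n →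
    (1/4) * ((v (n-1))^2 + (2 * v (n-1) - (if 2 ≤ n then v (n-2) else 0))^2)
    ≤ ∑ j ∈ Finset.range n, v j *
        ((3/2) * v j - 2 * (if 1 ≤ j then v (j - 1) else 0)
          + (1/2) * (if 2 ≤ j then v (j - 2) else 0)) := by
  intro n hn
  induction n, hn using Nat.le_induction with
  | base =>
    simp
    nlinarith [sq_nonneg (v 0)]
  | succ n hn ih =>
    rw [Finset.sum_range_succ]
    have e1 : n + 1 - 1 = n := by omega
    have e2 : n + 1 - 2 = n - 1 := by omega
    rw [e1, e2, if_pos (show 2 ≤ n + 1 by omega), if_pos hn]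
    set a := v n
    set b := v (n - 1)
    set c := (if 2 ≤ n then v (n - 2) else 0) with hc
    nlinarith [ih, sq_nonneg (a - 2*b + c)]

/-- the BDF2 quadratic form is bounded below by `(1/4)(v^{n-1})²`,
with constant `ε₀ = 1/4` independent of `n` and of the vector. -/
theorem bdf2_quadratic_form_lower_bound
    (ω : ℕ → ℝ)
    (hω : ω = fun k => if k = 0 then 3/2 else if k = 1 then -2 else if k = 2 then 1/2 else 0) :
    ∀ n : ℕ, 1 ≤ n → ∀ v : ℕ → ℝ,
      (1/4) * (v (n - 1))^2 ≤
        ∑ j ∈ Finset.range n, v j * ∑ k ∈ Finset.range (j + 1), ω (j - k) * v k ∧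
      (1/4) * (v (n - 1))^2 ≤
        ∑ j ∈ Finset.range n, v j *
          ((3/2) * v j - 2 * (if 1 ≤ j then v (j - 1) else 0)
            + (1/2) * (if 2 ≤ j then v (j - 2) else 0)) := by
  intro n hn v
  have key := bdf2_key v n hn
  have hle : (1/4 : ℝ) * (v (n-1))^2 ≤
      ∑ j ∈ Finset.range n, v j *
        ((3/2) * v j - 2 * (if 1 ≤ j then v (j - 1) else 0)
          + (1/2) * (if 2 ≤ j then v (j - 2) else 0)) := by
    refine le_trans ?_ key
    nlinarith [sq_nonneg (2 * v (n-1) - (if 2 ≤ n then v (n-2) else 0))]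
  constructor
  · have : ∑ j ∈ Finset.range n, v j * ∑ k ∈ Finset.range (j + 1), ω (j - k) * v k
        = ∑ j ∈ Finset.range n, v j *
          ((3/2) * v j - 2 * (if 1 ≤ j then v (j - 1) else 0)
            + (1/2) * (if 2 ≤ j then v (j - 2) else 0)) := by
      apply Finset.sum_congr rfl
      intro j _
      rw [hω]
      simp only []
      rw [bdf2_inner_eq v j]
    rw [this]
    exact hle
  · exact hle
end

section
/- Let α ∈ (0,1] and θ ∈ (−∞, 1/2). For every x ∈ (0, π], the real part f_α(x) of the FBT-θ generating function evaluated at e^{ix} (equivalently f_α(x) = (1/2)[ω^{(α)}(e^{ix}) + ω^{(α)}(e^{−ix})]) equals ((3−2θ)/(2−2θ))^α · (2 sin(x/2))^α · ((1+λ₂²−2λ₂ cos x)/(1+λ₁²−2λ₁ cos x))^{α/2} · cos(α·(x/2 − π/2 + φ₂(x) − φ₁(x))). -/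
open Complex Real

lemma cpow_polar (r ψ w : ℝ) (hr : 0 < r) (hψ1 : -π < ψ) (hψ2 : ψ ≤ π) :
    ((r : ℂ) * Complex.exp ((ψ:ℂ) * I)) ^ (w : ℂ)
      = ((r ^ w : ℝ) : ℂ) * Complex.exp (((w * ψ : ℝ) : ℂ) * I) := by
  have hz : (r:ℂ) * Complex.exp ((ψ:ℂ)*I) ≠ 0 :=
    mul_ne_zero (by exact_mod_cast hr.ne') (Complex.exp_ne_zero _)
  have harg : Complex.arg ((r:ℂ) * Complex.exp ((ψ:ℂ)*I)) = ψ := by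
    rw [Complex.exp_mul_I, Complex.arg_real_mul _ hr]
    exact Complex.arg_cos_add_sin_mul_I ⟨hψ1, hψ2⟩
  have habs : ‖(r:ℂ) * Complex.exp ((ψ:ℂ)*I)‖ = r := by
    simp [Complex.norm_exp, abs_of_pos hr]
  rw [Complex.cpow_def_of_ne_zero hz, Complex.log, habs, harg]
  rw [show ((Real.log r : ℂ) + (ψ:ℂ)*I) * (w:ℂ) = ((w * Real.log r : ℝ) : ℂ) + ((w*ψ:ℝ):ℂ)*I by
    push_cast; ring, Complex.exp_add, ← Complex.ofReal_exp]
  rw [Real.rpow_def_of_pos hr, mul_comm (Real.log r) w]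

lemma one_sub_mul_exp (l x : ℝ) (h1 : -1 < l) (h2 : l < 1) :
    (1 : ℂ) - (l:ℂ) * Complex.exp ((x:ℂ) * I)
      = ((Real.sqrt (1 + l^2 - 2*l*Real.cos x) : ℝ) : ℂ) *
        Complex.exp (((Real.arctan (l * Real.sin x / (l * Real.cos x - 1)) : ℝ) : ℂ) * I) := by
  set c := Real.cos x with hc
  set s := Real.sin x with hs
  set t := l * s / (l * c - 1) with ht
  set Q := 1 + l^2 - 2*l*c with hQdef
  have hsc : s^2 + c^2 = 1 := Real.sin_sq_add_cos_sq x
  have hlc : 0 < 1 - l * c := by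
    have h3 : -1 ≤ c := Real.neg_one_le_cos x
    have h4 : c ≤ 1 := Real.cos_le_one x
    nlinarith
  have hne : l * c - 1 ≠ 0 := by intro h; rw [sub_eq_zero] at h; nlinarith
  have hQ : Q = (1 - l*c)^2 + (l*s)^2 := by
    rw [hQdef]; linear_combination (-l^2) * hsc
  have hQpos : 0 < Q := by nlinarith [sq_nonneg (l*s)]
  have ht2 : t^2 * (1-l*c)^2 = (l*s)^2 := by
    rw [ht, div_pow, div_mul_eq_mul_div, div_eq_iff (pow_ne_zero 2 hne)]; ring
  have h1t : (1 + t^2) * (1-l*c)^2 = Q := by linear_combination ht2 - hQ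
  have hsq : Real.sqrt (1 + t^2) * (1 - l*c) = Real.sqrt Q := by
    rw [← Real.sqrt_sq hlc.le, ← Real.sqrt_mul (by positivity)]
    rw [h1t]
  have hsqt : 0 < Real.sqrt (1 + t^2) := Real.sqrt_pos.mpr (by positivity)
  have htv : t * (1 - l*c) = -(l*s) := by
    rw [ht, div_mul_eq_mul_div, div_eq_iff hne]; ring
  have e1 : Real.sqrt Q * Real.cos (Real.arctan t) = 1 - l * c := by
    rw [Real.cos_arctan, mul_one_div, div_eq_iff hsqt.ne']
    linear_combination - hsq
  have e2 : Real.sqrt Q * Real.sin (Real.arctan t) = -(l * s) := by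
    rw [Real.sin_arctan, ← mul_div_assoc, div_eq_iff hsqt.ne', ← hsq]
    linear_combination Real.sqrt (1+t^2) * htv
  calc (1 : ℂ) - (l:ℂ) * Complex.exp ((x:ℂ) * I)
      = ((1 - l*c : ℝ) : ℂ) + ((-(l*s) : ℝ) : ℂ) * I := by
        rw [Complex.exp_mul_I, ← Complex.ofReal_cos, ← Complex.ofReal_sin, ← hc, ← hs]
        push_cast; ring
    _ = _ := by
        rw [Complex.exp_mul_I, ← Complex.ofReal_cos, ← Complex.ofReal_sin, ← e1, ← e2]
        push_cast; ring

lemma one_sub_mul_exp' (l x : ℝ) (h1 : -1 < l) (h2 : l < 1) :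
    (1 : ℂ) - (l:ℂ) * Complex.exp (((-x:ℝ):ℂ) * I)
      = ((Real.sqrt (1 + l^2 - 2*l*Real.cos x) : ℝ) : ℂ) *
        Complex.exp (((-(Real.arctan (l * Real.sin x / (l * Real.cos x - 1))) : ℝ) : ℂ) * I) := by
  simpa [Real.cos_neg, Real.sin_neg, mul_neg, neg_div, Real.arctan_neg]
    using one_sub_mul_exp l (-x) h1 h2

lemma one_sub_exp (x : ℝ) :
    (1:ℂ) - Complex.exp ((x:ℂ) * I)
      = ((2 * Real.sin (x/2) : ℝ) : ℂ) * Complex.exp (((x/2 - π/2 : ℝ) : ℂ) * I) := by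
  have hcos : Real.cos (x/2 - π/2) = Real.sin (x/2) := by
    rw [show x/2 - π/2 = -(π/2 - x/2) by ring, Real.cos_neg, Real.cos_pi_div_two_sub]
  have hsin : Real.sin (x/2 - π/2) = -Real.cos (x/2) := by
    rw [show x/2 - π/2 = -(π/2 - x/2) by ring, Real.sin_neg, Real.sin_pi_div_two_sub]
  have h1 : Real.cos x = 1 - 2 * Real.sin (x/2)^2 := by
    have h0 := Real.cos_two_mul (x/2)
    rw [show 2 * (x/2) = x by ring] at h0
    have h2 := Real.sin_sq_add_cos_sq (x/2)
    linarith
  have h2 : Real.sin x = 2 * Real.sin (x/2) * Real.cos (x/2) := by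
    have := Real.sin_two_mul (x/2)
    rw [show 2 * (x/2) = x by ring] at this
    linarith
  rw [Complex.exp_mul_I, Complex.exp_mul_I, ← Complex.ofReal_cos, ← Complex.ofReal_sin,
    ← Complex.ofReal_cos, ← Complex.ofReal_sin, hcos, hsin, h1, h2]
  push_cast; ring

lemma one_sub_exp_neg (x : ℝ) :
    (1:ℂ) - Complex.exp (((-x : ℝ):ℂ) * I)
      = ((2 * Real.sin (x/2) : ℝ) : ℂ) * Complex.exp (((π/2 - x/2 : ℝ) : ℂ) * I) := by
  have hcos : Real.cos (π/2 - x/2) = Real.sin (x/2) := Real.cos_pi_div_two_sub _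
  have hsin : Real.sin (π/2 - x/2) = Real.cos (x/2) := Real.sin_pi_div_two_sub _
  have h1 : Real.cos (-x) = 1 - 2 * Real.sin (x/2)^2 := by
    rw [Real.cos_neg]
    have h0 := Real.cos_two_mul (x/2)
    rw [show 2 * (x/2) = x by ring] at h0
    have h2 := Real.sin_sq_add_cos_sq (x/2)
    linarith
  have h2 : Real.sin (-x) = -(2 * Real.sin (x/2) * Real.cos (x/2)) := by
    rw [Real.sin_neg]
    have := Real.sin_two_mul (x/2)
    rw [show 2 * (x/2) = x by ring] at this
    linarith
  rw [Complex.exp_mul_I, Complex.exp_mul_I, ← Complex.ofReal_cos, ← Complex.ofReal_sin,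
    ← Complex.ofReal_cos, ← Complex.ofReal_sin, hcos, hsin, h1, h2]
  push_cast; ring

set_option maxHeartbeats 1600000 in
theorem fbt_theta_symbol_polar_form (α θ : ℝ) (hα : α ∈ Set.Ioc (0:ℝ) 1) (hθ : θ < 1/2)
    (l1 l2 : ℝ) (hl1 : l1 = θ / (θ - 1)) (hl2 : l2 = (1 - 2*θ) / (3 - 2*θ))
    (ω : ℂ → ℂ)
    (hω : ∀ ξ : ℂ, ω ξ =
      ((1 : ℂ) - (θ : ℂ) + (θ : ℂ) * ξ) ^ (-(α : ℂ)) *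
        (((3/2 : ℂ) - (θ : ℂ)) - ((2 : ℂ) - 2 * (θ : ℂ)) * ξ
          + ((1/2 : ℂ) - (θ : ℂ)) * ξ ^ 2) ^ (α : ℂ))
    (φ1 φ2 : ℝ → ℝ)
    (hφ1 : ∀ x, φ1 x = Real.arctan (l1 * Real.sin x / (l1 * Real.cos x - 1)))
    (hφ2 : ∀ x, φ2 x = Real.arctan (l2 * Real.sin x / (l2 * Real.cos x - 1))) :
    ∀ x ∈ Set.Ioc (0 : ℝ) π,
      (1/2 : ℂ) * (ω (Complex.exp (Complex.I * x)) + ω (Complex.exp (-(Complex.I * x)))) =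
        ((((3 - 2*θ)/(2 - 2*θ)) ^ α * (2 * Real.sin (x/2)) ^ α *
          ((1 + l2^2 - 2*l2*Real.cos x) / (1 + l1^2 - 2*l1*Real.cos x)) ^ (α/2) *
          Real.cos (α * (x/2 - π/2 + φ2 x - φ1 x)) : ℝ) : ℂ) := by
  intro x hx
  obtain ⟨hx0, hxπ⟩ := hx
  have hπ := Real.pi_pos
  -- basic bounds
  have hθ1 : (0:ℝ) < 1 - θ := by linarith
  have hθ3 : (0:ℝ) < 3 - 2*θ := by linarith
  have hl1a : -1 < l1 := by
    rw [hl1, lt_div_iff_of_neg (by linarith : θ - 1 < 0)]; linarith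
  have hl1b : l1 < 1 := by
    rw [hl1, div_lt_iff_of_neg (by linarith : θ - 1 < 0)]; linarith
  have hl2a : -1 < l2 := by
    have : (0:ℝ) < (1 - 2*θ) / (3 - 2*θ) := div_pos (by linarith) hθ3
    rw [hl2]; linarith
  have hl2b : l2 < 1 := by
    rw [hl2, div_lt_one hθ3]; linarith
  have hcos1 := Real.neg_one_le_cos x
  have hcos2 := Real.cos_le_one x
  have hsc := Real.sin_sq_add_cos_sq x
  have habs1 : |l1| < 1 := abs_lt.mpr ⟨hl1a, hl1b⟩
  have habs2 : |l2| < 1 := abs_lt.mpr ⟨hl2a, hl2b⟩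
  have hlc1 : 0 < 1 - l1 * Real.cos x := by
    have h5 : l1 * Real.cos x ≤ |l1| := by
      calc l1 * Real.cos x ≤ |l1 * Real.cos x| := le_abs_self _
        _ = |l1| * |Real.cos x| := abs_mul _ _
        _ ≤ |l1| * 1 := by gcongr; exact Real.abs_cos_le_one x
        _ = |l1| := mul_one _
    linarith
  have hlc2 : 0 < 1 - l2 * Real.cos x := by
    have h5 : l2 * Real.cos x ≤ |l2| := by
      calc l2 * Real.cos x ≤ |l2 * Real.cos x| := le_abs_self _
        _ = |l2| * |Real.cos x| := abs_mul _ _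
        _ ≤ |l2| * 1 := by gcongr; exact Real.abs_cos_le_one x
        _ = |l2| := mul_one _
    linarith
  have hQ1pos : 0 < 1 + l1^2 - 2*l1*Real.cos x := by
    nlinarith [sq_nonneg (l1 * Real.sin x), mul_pos hlc1 hlc1]
  have hQ2pos : 0 < 1 + l2^2 - 2*l2*Real.cos x := by
    nlinarith [sq_nonneg (l2 * Real.sin x), mul_pos hlc2 hlc2]
  have hsQ1 : 0 < Real.sqrt (1 + l1^2 - 2*l1*Real.cos x) := Real.sqrt_pos.mpr hQ1pos
  have hsQ2 : 0 < Real.sqrt (1 + l2^2 - 2*l2*Real.cos x) := Real.sqrt_pos.mpr hQ2pos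
  have hs2 : 0 < Real.sin (x/2) :=
    Real.sin_pos_of_pos_of_lt_pi (by linarith) (by linarith)
  -- angle bounds
  have hφ1a : -(π/2) < φ1 x := by rw [hφ1]; exact Real.neg_pi_div_two_lt_arctan _
  have hφ1b : φ1 x < π/2 := by rw [hφ1]; exact Real.arctan_lt_pi_div_two _
  have hφ2a : -(π/2) < φ2 x := by rw [hφ2]; exact Real.neg_pi_div_two_lt_arctan _
  have hφ2b : φ2 x < π/2 := by rw [hφ2]; exact Real.arctan_lt_pi_div_two _
  -- complex factorization helpers
  have hθC : ((θ:ℂ) - 1) ≠ 0 := by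
    intro h; rw [sub_eq_zero] at h
    have : θ = 1 := by exact_mod_cast h
    linarith
  have hθC3 : ((3:ℂ) - 2*(θ:ℂ)) ≠ 0 := by
    intro h; rw [sub_eq_zero] at h
    have : (3:ℝ) = 2*θ := by exact_mod_cast h
    linarith
  have hl1r : l1 * (θ - 1) = θ := by rw [hl1]; exact div_mul_cancel₀ _ (by intro h; rw [sub_eq_zero] at h; linarith)
  have hl2r : l2 * (3 - 2*θ) = 1 - 2*θ := by rw [hl2]; exact div_mul_cancel₀ _ (ne_of_gt hθ3)
  have hl1Cm : (l1:ℂ) * ((θ:ℂ) - 1) = (θ:ℂ) := by exact_mod_cast hl1r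
  have hl2Cm : (l2:ℂ) * (3 - 2*(θ:ℂ)) = 1 - 2*(θ:ℂ) := by exact_mod_cast hl2r
  have hfac1 : ∀ ξ : ℂ, (1 : ℂ) - (θ:ℂ) + (θ:ℂ) * ξ = ((1-θ:ℝ):ℂ) * (1 - (l1:ℂ)*ξ) := by
    intro ξ; push_cast; linear_combination (-ξ) * hl1Cm
  have hfac2 : ∀ ξ : ℂ, ((3/2 : ℂ) - (θ : ℂ)) - ((2 : ℂ) - 2 * (θ : ℂ)) * ξ
      + ((1/2 : ℂ) - (θ : ℂ)) * ξ ^ 2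
      = ((3/2-θ:ℝ):ℂ) * ((1 - ξ) * (1 - (l2:ℂ)*ξ)) := by
    intro ξ; push_cast; linear_combination ((ξ - ξ^2)/2) * hl2Cm
  -- values of the two factors at e^{ix}
  have hz1 : (1 : ℂ) - (θ:ℂ) + (θ:ℂ) * Complex.exp ((x:ℂ)*I)
      = (((1-θ) * Real.sqrt (1 + l1^2 - 2*l1*Real.cos x) : ℝ):ℂ)
        * Complex.exp (((φ1 x : ℝ):ℂ) * I) := by
    rw [hfac1, one_sub_mul_exp l1 x hl1a hl1b, ← hφ1 x]
    push_cast; ring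
  have hz2 : ((3/2 : ℂ) - (θ : ℂ)) - ((2 : ℂ) - 2 * (θ : ℂ)) * Complex.exp ((x:ℂ)*I)
      + ((1/2 : ℂ) - (θ : ℂ)) * (Complex.exp ((x:ℂ)*I)) ^ 2
      = (((3/2-θ) * (2*Real.sin (x/2)) * Real.sqrt (1 + l2^2 - 2*l2*Real.cos x) : ℝ):ℂ)
        * Complex.exp (((x/2 - π/2 + φ2 x : ℝ):ℂ) * I) := by
    rw [hfac2, one_sub_exp x, one_sub_mul_exp l2 x hl2a hl2b, ← hφ2 x]
    rw [show (((x/2 - π/2 + φ2 x : ℝ):ℂ)) * I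
        = ((x/2 - π/2 : ℝ):ℂ)*I + ((φ2 x : ℝ):ℂ)*I by push_cast; ring, Complex.exp_add]
    push_cast; ring
  -- values at e^{-ix}
  have hz1' : (1 : ℂ) - (θ:ℂ) + (θ:ℂ) * Complex.exp (((-x:ℝ):ℂ)*I)
      = (((1-θ) * Real.sqrt (1 + l1^2 - 2*l1*Real.cos x) : ℝ):ℂ)
        * Complex.exp (((-φ1 x : ℝ):ℂ) * I) := by
    rw [hfac1, one_sub_mul_exp' l1 x hl1a hl1b, ← hφ1 x]
    push_cast; ring
  have hz2' : ((3/2 : ℂ) - (θ : ℂ)) - ((2 : ℂ) - 2 * (θ : ℂ)) * Complex.exp (((-x:ℝ):ℂ)*I)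
      + ((1/2 : ℂ) - (θ : ℂ)) * (Complex.exp (((-x:ℝ):ℂ)*I)) ^ 2
      = (((3/2-θ) * (2*Real.sin (x/2)) * Real.sqrt (1 + l2^2 - 2*l2*Real.cos x) : ℝ):ℂ)
        * Complex.exp (((π/2 - x/2 - φ2 x : ℝ):ℂ) * I) := by
    rw [hfac2, one_sub_exp_neg x, one_sub_mul_exp' l2 x hl2a hl2b, ← hφ2 x]
    rw [show (((π/2 - x/2 - φ2 x : ℝ):ℂ)) * I
        = ((π/2 - x/2 : ℝ):ℂ)*I + ((-φ2 x : ℝ):ℂ)*I by push_cast; ring, Complex.exp_add]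
    push_cast; ring
  -- positivity of moduli
  have hR1 : 0 < (1-θ) * Real.sqrt (1 + l1^2 - 2*l1*Real.cos x) := mul_pos hθ1 hsQ1
  have hR2 : 0 < (3/2-θ) * (2*Real.sin (x/2)) * Real.sqrt (1 + l2^2 - 2*l2*Real.cos x) :=
    mul_pos (mul_pos (by linarith) (by linarith)) hsQ2
  -- cpow computations
  have hc1 : ((1 : ℂ) - (θ:ℂ) + (θ:ℂ) * Complex.exp ((x:ℂ)*I)) ^ (-(α:ℂ))
      = ((((1-θ) * Real.sqrt (1 + l1^2 - 2*l1*Real.cos x)) ^ (-α) : ℝ):ℂ)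
        * Complex.exp (((-α * φ1 x : ℝ):ℂ) * I) := by
    rw [hz1, show (-(α:ℂ)) = ((-α : ℝ):ℂ) by push_cast; ring]
    exact cpow_polar _ _ _ hR1 (by linarith) (by linarith)
  have hc2 : (((3/2 : ℂ) - (θ : ℂ)) - ((2 : ℂ) - 2 * (θ : ℂ)) * Complex.exp ((x:ℂ)*I)
      + ((1/2 : ℂ) - (θ : ℂ)) * (Complex.exp ((x:ℂ)*I)) ^ 2) ^ ((α:ℝ):ℂ)
      = ((((3/2-θ) * (2*Real.sin (x/2)) * Real.sqrt (1 + l2^2 - 2*l2*Real.cos x)) ^ α : ℝ):ℂ)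
        * Complex.exp (((α * (x/2 - π/2 + φ2 x) : ℝ):ℂ) * I) := by
    rw [hz2]
    exact cpow_polar _ _ _ hR2 (by linarith) (by linarith)
  have hc1' : ((1 : ℂ) - (θ:ℂ) + (θ:ℂ) * Complex.exp (((-x:ℝ):ℂ)*I)) ^ (-(α:ℂ))
      = ((((1-θ) * Real.sqrt (1 + l1^2 - 2*l1*Real.cos x)) ^ (-α) : ℝ):ℂ)
        * Complex.exp (((-α * (-φ1 x) : ℝ):ℂ) * I) := by
    rw [hz1', show (-(α:ℂ)) = ((-α : ℝ):ℂ) by push_cast; ring]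
    exact cpow_polar _ _ _ hR1 (by linarith) (by linarith)
  have hc2' : (((3/2 : ℂ) - (θ : ℂ)) - ((2 : ℂ) - 2 * (θ : ℂ)) * Complex.exp (((-x:ℝ):ℂ)*I)
      + ((1/2 : ℂ) - (θ : ℂ)) * (Complex.exp (((-x:ℝ):ℂ)*I)) ^ 2) ^ ((α:ℝ):ℂ)
      = ((((3/2-θ) * (2*Real.sin (x/2)) * Real.sqrt (1 + l2^2 - 2*l2*Real.cos x)) ^ α : ℝ):ℂ)
        * Complex.exp (((α * (π/2 - x/2 - φ2 x) : ℝ):ℂ) * I) := by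
    rw [hz2']
    exact cpow_polar _ _ _ hR2 (by linarith) (by linarith)
  -- values of ω
  have hω1 : ω (Complex.exp ((x:ℂ)*I))
      = ((((1-θ) * Real.sqrt (1 + l1^2 - 2*l1*Real.cos x)) ^ (-α) : ℝ):ℂ)
        * ((((3/2-θ) * (2*Real.sin (x/2)) * Real.sqrt (1 + l2^2 - 2*l2*Real.cos x)) ^ α : ℝ):ℂ)
        * Complex.exp (((α * (x/2 - π/2 + φ2 x - φ1 x) : ℝ):ℂ) * I) := by
    rw [hω, hc1, hc2]
    rw [show ((α * (x/2 - π/2 + φ2 x - φ1 x) : ℝ):ℂ) * I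
        = ((-α * φ1 x : ℝ):ℂ)*I + ((α * (x/2 - π/2 + φ2 x) : ℝ):ℂ)*I by push_cast; ring,
      Complex.exp_add]
    ring
  have hω2 : ω (Complex.exp (((-x:ℝ):ℂ)*I))
      = ((((1-θ) * Real.sqrt (1 + l1^2 - 2*l1*Real.cos x)) ^ (-α) : ℝ):ℂ)
        * ((((3/2-θ) * (2*Real.sin (x/2)) * Real.sqrt (1 + l2^2 - 2*l2*Real.cos x)) ^ α : ℝ):ℂ)
        * Complex.exp (((-(α * (x/2 - π/2 + φ2 x - φ1 x)) : ℝ):ℂ) * I) := by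
    rw [hω, hc1', hc2']
    rw [show ((-(α * (x/2 - π/2 + φ2 x - φ1 x)) : ℝ):ℂ) * I
        = ((-α * (-φ1 x) : ℝ):ℂ)*I + ((α * (π/2 - x/2 - φ2 x) : ℝ):ℂ)*I by push_cast; ring,
      Complex.exp_add]
    ring
  -- real modulus identity
  have hQdiv : (0:ℝ) ≤ (1 + l2^2 - 2*l2*Real.cos x) / (1 + l1^2 - 2*l1*Real.cos x) :=
    div_nonneg hQ2pos.le hQ1pos.le
  have hm : ((1-θ) * Real.sqrt (1 + l1^2 - 2*l1*Real.cos x)) ^ (-α)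
        * ((3/2-θ) * (2*Real.sin (x/2)) * Real.sqrt (1 + l2^2 - 2*l2*Real.cos x)) ^ α
      = ((3 - 2*θ)/(2 - 2*θ)) ^ α * (2 * Real.sin (x/2)) ^ α *
          ((1 + l2^2 - 2*l2*Real.cos x) / (1 + l1^2 - 2*l1*Real.cos x)) ^ (α/2) := by
    have h2θ : (2 - 2*θ) ≠ 0 := by intro h; nlinarith
    rw [Real.rpow_neg hR1.le, inv_mul_eq_div, ← Real.div_rpow hR2.le hR1.le]
    rw [show ((3/2-θ) * (2*Real.sin (x/2)) * Real.sqrt (1 + l2^2 - 2*l2*Real.cos x))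
          / ((1-θ) * Real.sqrt (1 + l1^2 - 2*l1*Real.cos x))
        = ((3 - 2*θ)/(2 - 2*θ)) * (2 * Real.sin (x/2))
          * Real.sqrt ((1 + l2^2 - 2*l2*Real.cos x) / (1 + l1^2 - 2*l1*Real.cos x)) by
      rw [Real.sqrt_div hQ2pos.le]
      field_simp]
    rw [Real.mul_rpow
        (mul_nonneg (div_nonneg (by linarith) (by linarith)) (by linarith)) (Real.sqrt_nonneg _),
      Real.mul_rpow (div_nonneg (by linarith) (by linarith)) (by linarith)]
    rw [Real.sqrt_eq_rpow, ← Real.rpow_mul hQdiv,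
      show (1:ℝ)/2*α = α/2 by ring]
  -- final assembly
  rw [show -(Complex.I * (x:ℂ)) = ((-x:ℝ):ℂ) * I by push_cast; ring,
    show Complex.I * (x:ℂ) = (x:ℂ) * I from mul_comm _ _,
    hω1, hω2]
  have hsum : Complex.exp (((α * (x/2 - π/2 + φ2 x - φ1 x) : ℝ):ℂ) * I)
      + Complex.exp (((-(α * (x/2 - π/2 + φ2 x - φ1 x)) : ℝ):ℂ) * I)
      = 2 * ((Real.cos (α * (x/2 - π/2 + φ2 x - φ1 x)) : ℝ):ℂ) := by
    rw [show ((-(α * (x/2 - π/2 + φ2 x - φ1 x)) : ℝ):ℂ)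
        = -(((α * (x/2 - π/2 + φ2 x - φ1 x) : ℝ):ℂ)) by push_cast; ring,
      ← Complex.two_cos, ← Complex.ofReal_cos]
  calc (1/2 : ℂ) *
        (((((1-θ) * Real.sqrt (1 + l1^2 - 2*l1*Real.cos x)) ^ (-α) : ℝ):ℂ)
          * ((((3/2-θ) * (2*Real.sin (x/2)) * Real.sqrt (1 + l2^2 - 2*l2*Real.cos x)) ^ α : ℝ):ℂ)
          * Complex.exp (((α * (x/2 - π/2 + φ2 x - φ1 x) : ℝ):ℂ) * I)
        + ((((1-θ) * Real.sqrt (1 + l1^2 - 2*l1*Real.cos x)) ^ (-α) : ℝ):ℂ)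
          * ((((3/2-θ) * (2*Real.sin (x/2)) * Real.sqrt (1 + l2^2 - 2*l2*Real.cos x)) ^ α : ℝ):ℂ)
          * Complex.exp (((-(α * (x/2 - π/2 + φ2 x - φ1 x)) : ℝ):ℂ) * I))
      = ((((1-θ) * Real.sqrt (1 + l1^2 - 2*l1*Real.cos x)) ^ (-α) : ℝ):ℂ)
          * ((((3/2-θ) * (2*Real.sin (x/2)) * Real.sqrt (1 + l2^2 - 2*l2*Real.cos x)) ^ α : ℝ):ℂ)
          * ((Complex.exp (((α * (x/2 - π/2 + φ2 x - φ1 x) : ℝ):ℂ) * I)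
              + Complex.exp (((-(α * (x/2 - π/2 + φ2 x - φ1 x)) : ℝ):ℂ) * I)) / 2) := by
        ring
    _ = _ := by
        rw [hsum]
        rw [show ((((3 - 2*θ)/(2 - 2*θ)) ^ α * (2 * Real.sin (x/2)) ^ α *
            ((1 + l2^2 - 2*l2*Real.cos x) / (1 + l1^2 - 2*l1*Real.cos x)) ^ (α/2) *
            Real.cos (α * (x/2 - π/2 + φ2 x - φ1 x)) : ℝ) : ℂ)
          = ((((1-θ) * Real.sqrt (1 + l1^2 - 2*l1*Real.cos x)) ^ (-α)
              * ((3/2-θ) * (2*Real.sin (x/2)) * Real.sqrt (1 + l2^2 - 2*l2*Real.cos x)) ^ α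
              * Real.cos (α * (x/2 - π/2 + φ2 x - φ1 x)) : ℝ) : ℂ) by rw [hm]]
        push_cast
        ring
end

section
/- Let θ ∈ (−∞, 1/2), λ₁ = θ/(θ−1), λ₂ = (1−2θ)/(3−2θ), and define h_θ(x) = x/2 − π/2 + φ₂(x) − φ₁(x). Then for every x ∈ (0, π), h_θ is differentiable at x and h′_θ(x) = Λ_θ(cos x) / [2(λ₁² − 2λ₁ cos x + 1)(λ₂² − 2λ₂ cos x + 1)], where Λ_θ(t) = 4λ₁λ₂ t² − 4λ₂(1+λ₁λ₂) t + 3λ₂² − λ₁² + λ₁²λ₂² + 1. -/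
open Real

lemma phi_hasDerivAt (l x : ℝ) (hla : -1 < l) (hlb : l < 1)
    (hc1 : -1 < Real.cos x) (hc2 : Real.cos x < 1) :
    HasDerivAt (fun y => Real.arctan (l * Real.sin y / (l * Real.cos y - 1)))
      (l * (l - Real.cos x) / (l^2 - 2*l*Real.cos x + 1)) x := by
  have hd : l * Real.cos x - 1 ≠ 0 := by
    nlinarith [mul_pos (by linarith : (0:ℝ) < 1 - l) (by linarith : (0:ℝ) < 1 + Real.cos x),
      mul_pos (by linarith : (0:ℝ) < 1 + l) (by linarith : (0:ℝ) < 1 - Real.cos x)]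
  have hD : 0 < l^2 - 2*l*Real.cos x + 1 := by
    nlinarith [sq_nonneg (l - Real.cos x)]
  have h1 : HasDerivAt (fun y => l * Real.sin y) (l * Real.cos x) x :=
    (Real.hasDerivAt_sin x).const_mul l
  have h2 : HasDerivAt (fun y => l * Real.cos y - 1) (l * (-Real.sin x)) x :=
    ((Real.hasDerivAt_cos x).const_mul l).sub_const 1
  have h3 := (h1.div h2 hd).arctan
  refine h3.congr_deriv ?_
  simp only [Pi.div_apply]
  have hs : Real.sin x ^ 2 = 1 - Real.cos x ^ 2 := Real.sin_sq x
  have e : 1 + (l * Real.sin x / (l * Real.cos x - 1)) ^ 2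
      = (l^2 - 2*l*Real.cos x + 1)/(l*Real.cos x - 1)^2 := by
    field_simp
    linear_combination l^2 * hs
  have hnum : l * Real.cos x * (l * Real.cos x - 1) - l * Real.sin x * (l * -Real.sin x)
      = l * (l - Real.cos x) := by
    linear_combination l^2 * hs
  rw [e, hnum]
  rw [one_div_div]
  field_simp

/-- derivative of `h_θ(x) = x/2 − π/2 + φ₂(x) − φ₁(x)` on `(0, π)`. -/
theorem h_theta_deriv (θ : ℝ) (hθ : θ < 1/2)
    (l1 l2 : ℝ) (hl1 : l1 = θ / (θ - 1)) (hl2 : l2 = (1 - 2*θ) / (3 - 2*θ))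
    (φ1 φ2 h : ℝ → ℝ)
    (hφ1 : ∀ x, φ1 x = Real.arctan (l1 * Real.sin x / (l1 * Real.cos x - 1)))
    (hφ2 : ∀ x, φ2 x = Real.arctan (l2 * Real.sin x / (l2 * Real.cos x - 1)))
    (hh : ∀ x, h x = x/2 - π/2 + φ2 x - φ1 x)
    (Λ : ℝ → ℝ)
    (hΛ : ∀ t, Λ t = 4*l1*l2*t^2 - 4*l2*(1 + l1*l2)*t + 3*l2^2 - l1^2 + l1^2*l2^2 + 1) :
    ∀ x ∈ Set.Ioo (0 : ℝ) π,
      HasDerivAt h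
        (Λ (Real.cos x) /
          (2 * (l1^2 - 2*l1*Real.cos x + 1) * (l2^2 - 2*l2*Real.cos x + 1))) x := by
  intro x hx
  obtain ⟨hx0, hxπ⟩ := hx
  have hθ1 : θ - 1 < 0 := by linarith
  have hden2 : (0:ℝ) < 3 - 2*θ := by linarith
  have hl1a : -1 < l1 := by
    rw [hl1, lt_div_iff_of_neg hθ1]; linarith
  have hl1b : l1 < 1 := by
    rw [hl1, div_lt_iff_of_neg hθ1]; linarith
  have hl2a : -1 < l2 := by
    rw [hl2, lt_div_iff₀ hden2]; linarith
  have hl2b : l2 < 1 := by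
    rw [hl2, div_lt_iff₀ hden2]; linarith
  have hc1 : -1 < Real.cos x := by
    rw [← Real.cos_pi]
    exact Real.cos_lt_cos_of_nonneg_of_le_pi hx0.le le_rfl hxπ
  have hc2 : Real.cos x < 1 := by
    rw [← Real.cos_zero]
    exact Real.cos_lt_cos_of_nonneg_of_le_pi le_rfl hxπ.le hx0
  have h1 := phi_hasDerivAt l1 x hl1a hl1b hc1 hc2
  have h2 := phi_hasDerivAt l2 x hl2a hl2b hc1 hc2
  have hφ1e : φ1 = fun y => Real.arctan (l1 * Real.sin y / (l1 * Real.cos y - 1)) := funext hφ1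
  have hφ2e : φ2 = fun y => Real.arctan (l2 * Real.sin y / (l2 * Real.cos y - 1)) := funext hφ2
  have hhe : h = fun y => y/2 - π/2 + φ2 y - φ1 y := funext hh
  subst hhe hφ1e hφ2e
  have hbase : HasDerivAt (fun y : ℝ => y/2 - π/2) (1/2) x := by
    simpa using ((hasDerivAt_id x).div_const 2).sub_const (π/2)
  have hsum := (hbase.add h2).sub h1
  refine hsum.congr_deriv ?_
  have hD1 : 0 < l1^2 - 2*l1*Real.cos x + 1 := by nlinarith [sq_nonneg (l1 - Real.cos x)]
  have hD2 : 0 < l2^2 - 2*l2*Real.cos x + 1 := by nlinarith [sq_nonneg (l2 - Real.cos x)]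
  rw [hΛ]
  rw [div_add_div _ _ two_ne_zero hD2.ne', div_sub_div _ _ (mul_ne_zero two_ne_zero hD2.ne') hD1.ne',
    div_eq_div_iff (by positivity) (by positivity)]
  ring
end

section
/- Let θ ∈ (−∞, 1/2), λ₁ = θ/(θ−1), λ₂ = (1−2θ)/(3−2θ), and Λ_θ(t) = 4λ₁λ₂ t² − 4λ₂(1+λ₁λ₂) t + 3λ₂² − λ₁² + λ₁²λ₂² + 1. Then Λ_θ(1) = 0, Λ_θ(−1) > 0, and Λ_θ(t) ≥ 0 for every t ∈ [−1, 1]. -/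
/-- the quadratic `Λ_θ` vanishes at `1`, is positive at `−1`,
and is nonnegative on `[−1, 1]`. -/
theorem Lambda_theta_nonneg (θ : ℝ) (hθ : θ < 1/2)
    (l1 l2 : ℝ) (hl1 : l1 = θ / (θ - 1)) (hl2 : l2 = (1 - 2*θ) / (3 - 2*θ))
    (Λ : ℝ → ℝ)
    (hΛ : ∀ t, Λ t = 4*l1*l2*t^2 - 4*l2*(1 + l1*l2)*t + 3*l2^2 - l1^2 + l1^2*l2^2 + 1) :
    Λ 1 = 0 ∧ 0 < Λ (-1) ∧ ∀ t ∈ Set.Icc (-1 : ℝ) 1, 0 ≤ Λ t := by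
  have hne1 : θ - 1 ≠ 0 := by intro h; nlinarith
  have hne2 : (3 : ℝ) - 2*θ ≠ 0 := by intro h; nlinarith
  have hd : 0 < (1 - θ) * (3 - 2*θ) := by nlinarith
  have hl2pos : 0 < l2 := by
    rw [hl2]; apply div_pos <;> linarith
  have h1 : 0 < 1 + l1*l2 := by
    have e : 1 + l1*l2 = (4*θ^2 - 6*θ + 3) / ((1 - θ) * (3 - 2*θ)) := by
      rw [hl1, hl2]; field_simp [show (3:ℝ) - θ*2 ≠ 0 by intro h; nlinarith, show (1:ℝ) - θ ≠ 0 by intro h; nlinarith]; ring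
    rw [e]
    apply div_pos _ hd
    nlinarith [sq_nonneg (2*θ - 3/2)]
  have h2 : 0 < 1 - 2*l1 + l1*l2 := by
    have e : 1 - 2*l1 + l1*l2 = 3 / ((1 - θ) * (3 - 2*θ)) := by
      rw [hl1, hl2]; field_simp [show (3:ℝ) - θ*2 ≠ 0 by intro h; nlinarith, show (1:ℝ) - θ ≠ 0 by intro h; nlinarith]; ring
    rw [e]
    exact div_pos (by norm_num) hd
  have hfact : ∀ t, Λ t = (1 - t) * (4*l2) * (1 - l1 + l1*l2 - l1*t) := by
    intro t
    rw [hΛ, hl1, hl2]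
    field_simp [show (3:ℝ) - θ*2 ≠ 0 by intro h; nlinarith]
    ring
  refine ⟨by rw [hfact]; ring, ?_, ?_⟩
  · rw [hfact]
    nlinarith [mul_pos hl2pos h1]
  · intro t ht
    obtain ⟨ht1, ht2⟩ := ht
    rw [hfact]
    have hf : 0 ≤ 1 - l1 + l1*l2 - l1*t := by
      nlinarith [mul_nonneg (by linarith : (0:ℝ) ≤ 1 - t) h1.le,
        mul_nonneg (by linarith : (0:ℝ) ≤ 1 + t) h2.le]
    have : 0 ≤ (1 - t) * (4*l2) := mul_nonneg (by linarith) (by linarith)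
    exact mul_nonneg this hf
end

section
/- Let α ∈ (0,1] and θ ∈ (−∞, 1/2). Then for every x ∈ [0, 2π], the real part of the FBT-θ generating function evaluated on the unit circle is nonnegative: f_α(x) := Re(ω^{(α)}(e^{ix})) = (1/2)[ω^{(α)}(e^{ix}) + ω^{(α)}(e^{−ix})] ≥ 0. -/
open Complex Real

set_option maxHeartbeats 1000000 in
/-- nonnegativity of the real part of the FBT-θ generating
function on the unit circle:
`f_α(x) = Re(ω^{(α)}(e^{ix})) = (1/2)[ω^{(α)}(e^{ix}) + ω^{(α)}(e^{−ix})] ≥ 0`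
for `x ∈ [0, 2π]`. -/
theorem fbt_theta_symbol_nonneg (α θ : ℝ) (hα : α ∈ Set.Ioc (0:ℝ) 1) (hθ : θ < 1/2)
    (ω : ℂ → ℂ)
    (hω : ∀ ξ : ℂ, ω ξ =
      ((1 : ℂ) - (θ : ℂ) + (θ : ℂ) * ξ) ^ (-(α : ℂ)) *
        (((3/2 : ℂ) - (θ : ℂ)) - ((2 : ℂ) - 2 * (θ : ℂ)) * ξ
          + ((1/2 : ℂ) - (θ : ℂ)) * ξ ^ 2) ^ (α : ℂ)) :
    ∀ x ∈ Set.Icc (0 : ℝ) (2 * π),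
      (((ω (Complex.exp (Complex.I * x))).re : ℂ) =
        (1/2 : ℂ) * (ω (Complex.exp (Complex.I * x)) + ω (Complex.exp (-(Complex.I * x))))) ∧
      0 ≤ (ω (Complex.exp (Complex.I * x))).re := by
  obtain ⟨hα0, hα1⟩ := hα
  intro x hx
  set ξ : ℂ := Complex.exp (Complex.I * x) with hξdef
  set c : ℝ := Real.cos x with hc
  set s : ℝ := Real.sin x with hs
  have hcs : s ^ 2 = 1 - c ^ 2 := by
    have := Real.sin_sq_add_cos_sq x; nlinarith
  have hc1 : -1 ≤ c := Real.neg_one_le_cos x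
  have hc2 : c ≤ 1 := Real.cos_le_one x
  clear_value c s
  have hξ : ξ = (c : ℂ) + (s : ℂ) * Complex.I := by
    rw [hξdef, show Complex.I * (x : ℂ) = (x : ℂ) * Complex.I by ring, Complex.exp_mul_I,
      ← Complex.ofReal_cos, ← Complex.ofReal_sin, hc, hs]
  set A : ℂ := (1 : ℂ) - (θ : ℂ) + (θ : ℂ) * ξ with hA
  set B : ℂ := (((3/2 : ℂ) - (θ : ℂ)) - ((2 : ℂ) - 2 * (θ : ℂ)) * ξ
          + ((1/2 : ℂ) - (θ : ℂ)) * ξ ^ 2) with hB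
  have hAre : A.re = 1 - θ + θ * c := by simp [hA, hξ]
  have hAim : A.im = θ * s := by simp [hA, hξ]
  have hBre : B.re = 3/2 - θ - (2 - 2*θ) * c + (1/2 - θ) * (c^2 - s^2) := by
    simp [hB, hξ, pow_two, Complex.mul_re]
  have hBim : B.im = -(2 - 2*θ) * s + (1/2 - θ) * (2 * c * s) := by
    simp [hB, hξ, pow_two, Complex.mul_im]
    ring
  have hApos : 0 < A.re := by rw [hAre]; rcases le_or_gt θ 0 with h | h <;> nlinarith
  have hA0 : A ≠ 0 := fun h => by simp [h] at hApos
  have hAargπ : A.arg ≠ π := by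
    rw [Ne, Complex.arg_eq_pi_iff]; rintro ⟨h1, -⟩; linarith
  have hBargπ : B.arg ≠ π := by
    rw [Ne, Complex.arg_eq_pi_iff]; rintro ⟨h1, h2⟩
    rw [hBim] at h2
    rw [hBre] at h1
    have hs0 : s = 0 := by
      rcases mul_eq_zero.mp (show s * (-(2-2*θ) + (1/2-θ)*(2*c)) = 0 by linear_combination h2)
        with h | h
      · exact h
      · nlinarith
    have hss : s ^ 2 = 0 := by rw [hs0]; ring
    have hcc : c ^ 2 = 1 := by linarith
    nlinarith [h1, hcc, hss, mul_nonneg (show (0:ℝ) ≤ 2-2*θ by linarith)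
      (show (0:ℝ) ≤ 1-c by linarith)]
  -- key inequality : Re (B * conj A) = (1-c)^2 (1-2θ)(1-θ) ≥ 0
  have hKey : 0 ≤ B.re * A.re + B.im * A.im := by
    rw [hAre, hAim, hBre, hBim]
    have hfact : (3/2 - θ - (2 - 2*θ) * c + (1/2 - θ) * (c^2 - s^2)) * (1 - θ + θ * c)
        + (-(2 - 2*θ) * s + (1/2 - θ) * (2 * c * s)) * (θ * s)
        = (1 - c)^2 * ((1 - 2*θ) * (1 - θ)) := by
      linear_combination (θ*(-(2-2*θ)+(1-2*θ)*c) - (1/2-θ)*(1-θ+θ*c)) * hcs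
    rw [hfact]
    exact mul_nonneg (sq_nonneg _) (by nlinarith)
  have hconjξ : Complex.exp (-(Complex.I * x)) = (starRingEnd ℂ) ξ := by
    rw [hξdef, ← Complex.exp_conj]
    congr 1
    simp [map_mul, Complex.conj_I, Complex.conj_ofReal]
  have hconjα : (starRingEnd ℂ) ((α : ℂ)) = (α : ℂ) := Complex.conj_ofReal α
  have hconjnα : (starRingEnd ℂ) (-(α : ℂ)) = -(α : ℂ) := by rw [map_neg, hconjα]
  have hωconj : ω ((starRingEnd ℂ) ξ) = (starRingEnd ℂ) (ω ξ) := by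
    rw [hω, hω, ← hA, ← hB]
    have hAc : (1 : ℂ) - (θ : ℂ) + (θ : ℂ) * (starRingEnd ℂ) ξ = (starRingEnd ℂ) A := by
      simp only [hA, map_add, map_sub, map_mul, map_one, Complex.conj_ofReal]
    have hBc : (((3/2 : ℂ) - (θ : ℂ)) - ((2 : ℂ) - 2 * (θ : ℂ)) * (starRingEnd ℂ) ξ
          + ((1/2 : ℂ) - (θ : ℂ)) * ((starRingEnd ℂ) ξ) ^ 2) = (starRingEnd ℂ) B := by
      simp only [hB, map_add, map_sub, map_mul, map_pow, map_div₀, map_ofNat, map_one,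
        Complex.conj_ofReal]
    rw [hAc, hBc, Complex.conj_cpow _ _ hAargπ, Complex.conj_cpow _ _ hBargπ,
      hconjα, hconjnα, ← map_mul]
  refine ⟨?_, ?_⟩
  · rw [hconjξ, hωconj, Complex.add_conj]
    push_cast
    ring
  · by_cases hB0 : B = 0
    · rw [hω, ← hA, ← hB, hB0,
        Complex.zero_cpow (show (α:ℂ) ≠ 0 from Complex.ofReal_ne_zero.mpr hα0.ne')]
      simp
    · have hωval : ω ξ = Complex.exp ((Complex.log B - Complex.log A) * (α : ℂ)) := by
        rw [hω, ← hA, ← hB, Complex.cpow_def_of_ne_zero hA0, Complex.cpow_def_of_ne_zero hB0,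
          ← Complex.exp_add]
        congr 1
        ring
      rw [hωval, Complex.exp_re]
      apply mul_nonneg (Real.exp_nonneg _)
      have him : ((Complex.log B - Complex.log A) * (α : ℂ)).im = (B.arg - A.arg) * α := by
        simp [Complex.mul_im, Complex.sub_im, Complex.sub_re, Complex.log_im]
      rw [him]
      have haA : |A.arg| < π / 2 := Complex.abs_arg_lt_pi_div_two_iff.mpr (Or.inl hApos)
      obtain ⟨ha1, ha2⟩ := abs_lt.mp haA
      have hbB1 : -π < B.arg := Complex.neg_pi_lt_arg B
      have hbB2 : B.arg < π := lt_of_le_of_ne (Complex.arg_le_pi B) hBargπ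
      have hcosT : 0 ≤ Real.cos (B.arg - A.arg) := by
        rw [Real.cos_sub, Complex.cos_arg hB0, Complex.cos_arg hA0,
          Complex.sin_arg, Complex.sin_arg]
        have hap : 0 < ‖A‖ := norm_pos_iff.mpr hA0
        have hbp : 0 < ‖B‖ := norm_pos_iff.mpr hB0
        rw [div_mul_div_comm, div_mul_div_comm, ← add_div]
        exact div_nonneg hKey (by positivity)
      have hT : |B.arg - A.arg| ≤ π / 2 := by
        by_contra h
        push_neg at h
        have h2 : |B.arg - A.arg| < π + π / 2 :=
          abs_lt.mpr ⟨by linarith, by linarith⟩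
        have h3 := Real.cos_neg_of_pi_div_two_lt_of_lt h h2
        rw [Real.cos_abs] at h3
        linarith
      obtain ⟨hT1, hT2⟩ := abs_le.mp hT
      apply Real.cos_nonneg_of_mem_Icc
      constructor
      · nlinarith [Real.pi_pos]
      · nlinarith [Real.pi_pos]
end

section
/- Let α ∈ (0,1] and θ ∈ (−1/(2α), 1], and set λ′₁ = αθ/(1+αθ) ∈ (−1,1) and λ′₂ = (1−2θ)/(3−2θ) ∈ [−1,1). For every x ∈ (0, π], the real part f_α(x) of the FBN-θ generating function evaluated at e^{ix} equals (3/2−θ)^α (1+αθ) (2 sin(x/2))^α (1+λ′₁² − 2λ′₁ cos x)^{1/2} (1+λ′₂² − 2λ′₂ cos x)^{α/2} · cos((α/2)(x−π) + φ₁(x) + αφ₂(x)), where φ₁(x) = arctan(λ′₁ sin x/(λ′₁ cos x − 1)) and φ₂(x) = arctan(λ′₂ sin x/(λ′₂ cos x − 1)). -/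
open Complex Real

lemma polarC (a b : ℝ) (ha : 0 < a) :
    (a : ℂ) + b * Complex.I =
      (Real.sqrt (a^2+b^2) : ℂ) * Complex.exp ((Real.arctan (b/a) : ℂ) * Complex.I) := by
  have ha' : a ≠ 0 := ne_of_gt ha
  have hS : 0 < Real.sqrt (a^2+b^2) := Real.sqrt_pos.mpr (by positivity)
  have h1 : Real.sqrt (1+(b/a)^2) * a = Real.sqrt (a^2+b^2) := by
    rw [← Real.sqrt_sq ha.le, ← Real.sqrt_mul (by positivity)]
    congr 1
    field_simp
    rw [Real.sq_sqrt (by positivity)]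
  have hQ : 0 < Real.sqrt (1+(b/a)^2) := Real.sqrt_pos.mpr (by positivity)
  rw [Complex.exp_mul_I, ← Complex.ofReal_cos, ← Complex.ofReal_sin,
    Real.cos_arctan, Real.sin_arctan]
  have hcos : Real.sqrt (a^2+b^2) * (1 / Real.sqrt (1+(b/a)^2)) = a := by
    rw [← h1]; field_simp
  have hsin : Real.sqrt (a^2+b^2) * (b/a / Real.sqrt (1+(b/a)^2)) = b := by
    rw [← h1]; field_simp
  calc (a:ℂ) + b * Complex.I
      = ((Real.sqrt (a^2+b^2) * (1 / Real.sqrt (1+(b/a)^2)) : ℝ) : ℂ)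
        + ((Real.sqrt (a^2+b^2) * (b/a / Real.sqrt (1+(b/a)^2)) : ℝ) : ℂ) * Complex.I := by
        rw [hcos, hsin]
    _ = _ := by push_cast; ring

lemma cpow_polar_s13 (R φ a : ℝ) (hR : 0 < R) (h1 : -π < φ) (h2 : φ ≤ π) :
    ((R:ℂ) * Complex.exp ((φ:ℂ) * Complex.I)) ^ (a:ℂ) =
      ((R ^ a : ℝ) : ℂ) * Complex.exp (((a*φ : ℝ):ℂ) * Complex.I) := by
  have hz : (R:ℂ) * Complex.exp ((φ:ℂ)*Complex.I)
      = Complex.exp ((Real.log R : ℂ) + (φ:ℂ)*Complex.I) := by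
    rw [Complex.exp_add, ← Complex.ofReal_exp, Real.exp_log hR]
  have hne : (R:ℂ) * Complex.exp ((φ:ℂ)*Complex.I) ≠ 0 := by
    rw [hz]; exact Complex.exp_ne_zero _
  rw [Complex.cpow_def_of_ne_zero hne, hz, Complex.log_exp (by simpa using h1) (by simpa using h2)]
  rw [show ((Real.log R : ℂ) + (φ:ℂ)*Complex.I) * (a:ℂ)
      = ((a * Real.log R : ℝ):ℂ) + ((a*φ : ℝ):ℂ)*Complex.I by push_cast; ring]
  rw [Complex.exp_add]
  congr 1
  rw [← Complex.ofReal_exp]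
  norm_cast
  rw [Real.rpow_def_of_pos hR, mul_comm]

lemma oneSubExp (x : ℝ) : (1:ℂ) - Complex.exp (Complex.I * x) =
    ((2*Real.sin (x/2) : ℝ):ℂ) * Complex.exp ((((x-π)/2 : ℝ):ℂ) * Complex.I) := by
  rw [mul_comm Complex.I (x:ℂ), Complex.exp_mul_I, Complex.exp_mul_I,
    ← Complex.ofReal_cos, ← Complex.ofReal_sin, ← Complex.ofReal_cos, ← Complex.ofReal_sin]
  have hc : Real.cos ((x-π)/2) = Real.sin (x/2) := by
    rw [show (x-π)/2 = x/2 - π/2 by ring, Real.cos_sub_pi_div_two]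
  have hs : Real.sin ((x-π)/2) = -Real.cos (x/2) := by
    rw [show (x-π)/2 = x/2 - π/2 by ring, Real.sin_sub_pi_div_two]
  rw [hc, hs]
  have h1 : Real.cos x = 1 - 2 * Real.sin (x/2)^2 := by
    rw [show x = 2*(x/2) by ring, Real.cos_two_mul']
    norm_num
    linear_combination Real.sin_sq_add_cos_sq (x/2)
  have h2 : Real.sin x = 2 * Real.sin (x/2) * Real.cos (x/2) := by
    rw [show x = 2*(x/2) by ring, Real.sin_two_mul]; norm_num
  rw [h1, h2]; push_cast; ring

lemma oneSubExp' (x : ℝ) : (1:ℂ) - Complex.exp (-(Complex.I * x)) =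
    ((2*Real.sin (x/2) : ℝ):ℂ) * Complex.exp (((-((x-π)/2) : ℝ):ℂ) * Complex.I) := by
  have h := oneSubExp (-x)
  rw [show Complex.I * ((-x:ℝ):ℂ) = -(Complex.I * x) by push_cast; ring] at h
  rw [h]
  have e1 : Complex.exp ((((-x-π)/2 : ℝ):ℂ) * Complex.I)
      = -Complex.exp (((-((x-π)/2) : ℝ):ℂ) * Complex.I) := by
    rw [show (((-x-π)/2:ℝ):ℂ) * Complex.I
        = ((-((x-π)/2):ℝ):ℂ) * Complex.I + -((π:ℂ) * Complex.I) by push_cast; ring,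
      Complex.exp_add, Complex.exp_neg, Complex.exp_pi_mul_I]
    norm_num
  rw [e1]
  have : Real.sin (-x/2) = - Real.sin (x/2) := by
    rw [show (-x/2 : ℝ) = -(x/2) by ring, Real.sin_neg]
  rw [this]
  push_cast; ring

lemma mulPolar (u v p q : ℝ) :
    ((u:ℂ) * Complex.exp ((p:ℂ) * Complex.I)) * ((v:ℂ) * Complex.exp ((q:ℂ) * Complex.I))
      = ((u*v:ℝ):ℂ) * Complex.exp (((p+q:ℝ):ℂ) * Complex.I) := by
  rw [show ((p+q:ℝ):ℂ) * Complex.I = (p:ℂ)*Complex.I + (q:ℂ)*Complex.I by push_cast; ring,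
    Complex.exp_add]
  push_cast; ring

lemma polarFactor (l x : ℝ) (h : 0 < 1 - l * Real.cos x) :
    (1:ℂ) - l * Complex.exp (Complex.I * x)
      = ((Real.sqrt (1 + l^2 - 2*l*Real.cos x) : ℝ):ℂ)
        * Complex.exp (((Real.arctan (l * Real.sin x / (l * Real.cos x - 1)) : ℝ):ℂ) * Complex.I) := by
  have hA : (1 - l*Real.cos x)^2 + (-(l*Real.sin x))^2 = 1 + l^2 - 2*l*Real.cos x := by
    linear_combination (l^2) * Real.sin_sq_add_cos_sq x
  have harg : -(l*Real.sin x) / (1 - l*Real.cos x)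
      = l * Real.sin x / (l * Real.cos x - 1) := by
    rw [show l * Real.cos x - 1 = -(1 - l*Real.cos x) by ring, ← neg_div_neg_eq]
    norm_num
  have hp := polarC (1 - l*Real.cos x) (-(l*Real.sin x)) h
  rw [hA, harg] at hp
  rw [← hp, mul_comm Complex.I (x:ℂ), Complex.exp_mul_I,
    ← Complex.ofReal_cos, ← Complex.ofReal_sin]
  push_cast; ring

lemma polarFactor' (l x : ℝ) (h : 0 < 1 - l * Real.cos x) :
    (1:ℂ) - l * Complex.exp (-(Complex.I * x))
      = ((Real.sqrt (1 + l^2 - 2*l*Real.cos x) : ℝ):ℂ)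
        * Complex.exp (((-(Real.arctan (l * Real.sin x / (l * Real.cos x - 1))) : ℝ):ℂ) * Complex.I) := by
  have hA : (1 - l*Real.cos x)^2 + (l*Real.sin x)^2 = 1 + l^2 - 2*l*Real.cos x := by
    linear_combination (l^2) * Real.sin_sq_add_cos_sq x
  have harg : (l*Real.sin x) / (1 - l*Real.cos x)
      = -(l * Real.sin x / (l * Real.cos x - 1)) := by
    rw [← div_neg, show -(l*Real.cos x - 1) = 1 - l*Real.cos x by ring]
  have hp := polarC (1 - l*Real.cos x) (l*Real.sin x) h
  rw [hA, harg, Real.arctan_neg] at hp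
  rw [← hp, show -(Complex.I * (x:ℂ)) = ((-x:ℝ):ℂ) * Complex.I by push_cast; ring,
    Complex.exp_mul_I, ← Complex.ofReal_cos, ← Complex.ofReal_sin, Real.cos_neg, Real.sin_neg]
  push_cast; ring

lemma expCosSum (t : ℝ) :
    Complex.exp ((t:ℂ) * Complex.I) + Complex.exp (((-t:ℝ):ℂ) * Complex.I)
      = 2 * ((Real.cos t : ℝ):ℂ) := by
  rw [Complex.exp_mul_I, Complex.exp_mul_I, ← Complex.ofReal_cos, ← Complex.ofReal_sin,
    ← Complex.ofReal_cos, ← Complex.ofReal_sin, Real.cos_neg, Real.sin_neg]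
  push_cast; ring

/-- polar form of the real part
`f_α(x) = (1/2)[ω^{(α)}(e^{ix}) + ω^{(α)}(e^{−ix})]` of the FBN-θ generating
function on the unit circle, for `x ∈ (0, π]`. -/
theorem fbn_theta_symbol_polar_form (α θ : ℝ) (hα : α ∈ Set.Ioc (0:ℝ) 1)
    (hθ : θ ∈ Set.Ioc (-(1/(2*α))) 1)
    (l1 l2 : ℝ) (hl1 : l1 = α*θ / (1 + α*θ)) (hl2 : l2 = (1 - 2*θ) / (3 - 2*θ))
    (ω : ℂ → ℂ)
    (hω : ∀ ξ : ℂ, ω ξ =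
      ((1 : ℂ) + (α : ℂ) * (θ : ℂ) - (α : ℂ) * (θ : ℂ) * ξ) *
        (((3/2 : ℂ) - (θ : ℂ)) - ((2 : ℂ) - 2 * (θ : ℂ)) * ξ
          + ((1/2 : ℂ) - (θ : ℂ)) * ξ ^ 2) ^ (α : ℂ))
    (φ1 φ2 : ℝ → ℝ)
    (hφ1 : ∀ x, φ1 x = Real.arctan (l1 * Real.sin x / (l1 * Real.cos x - 1)))
    (hφ2 : ∀ x, φ2 x = Real.arctan (l2 * Real.sin x / (l2 * Real.cos x - 1))) :
    l1 ∈ Set.Ioo (-1 : ℝ) 1 ∧ l2 ∈ Set.Ico (-1 : ℝ) 1 ∧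
    ∀ x ∈ Set.Ioc (0 : ℝ) π,
      (1/2 : ℂ) * (ω (Complex.exp (Complex.I * x)) + ω (Complex.exp (-(Complex.I * x)))) =
        (((3/2 - θ) ^ α * (1 + α*θ) * (2 * Real.sin (x/2)) ^ α *
          (1 + l1^2 - 2*l1*Real.cos x) ^ ((1:ℝ)/2) *
          (1 + l2^2 - 2*l2*Real.cos x) ^ (α/2) *
          Real.cos ((α/2) * (x - π) + φ1 x + α * φ2 x) : ℝ) : ℂ) := by
  obtain ⟨hα0, hα1⟩ := hα
  obtain ⟨hθl, hθu⟩ := hθ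
  have hαne : α ≠ 0 := ne_of_gt hα0
  have hπ := Real.pi_pos
  have hαθ : -(1/2) < α*θ := by
    have h := mul_lt_mul_of_pos_left hθl hα0
    have h2 : α * -(1/(2*α)) = -(1/2) := by field_simp
    linarith
  have hαθ1 : α*θ ≤ 1 := by nlinarith
  have hd1 : 0 < 1 + α*θ := by linarith
  have hd2 : 0 < 3 - 2*θ := by linarith
  have hc0 : 0 < 3/2 - θ := by linarith
  have hl1m : l1 ∈ Set.Ioo (-1:ℝ) 1 := by
    constructor
    · rw [hl1, lt_div_iff₀ hd1]; linarith
    · rw [hl1, div_lt_one hd1]; linarith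
  have hl2m : l2 ∈ Set.Ico (-1:ℝ) 1 := by
    constructor
    · rw [hl2, le_div_iff₀ hd2]; linarith
    · rw [hl2, div_lt_one hd2]; linarith
  refine ⟨hl1m, hl2m, ?_⟩
  intro x hx
  obtain ⟨hx0, hxπ⟩ := hx
  have hsin : 0 < Real.sin (x/2) :=
    Real.sin_pos_of_pos_of_lt_pi (by linarith) (by linarith)
  have hcl1 : (1 + α*θ) * l1 = α*θ := by rw [hl1]; field_simp
  have hcl2 : (3/2 - θ) * l2 = 1/2 - θ := by rw [hl2]; field_simp
  have hcl1' : ((1 + α*θ : ℝ):ℂ) * (l1:ℂ) = ((α*θ:ℝ):ℂ) := by exact_mod_cast congrArg Complex.ofReal hcl1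
  have hcl2' : ((3/2 - θ : ℝ):ℂ) * (l2:ℂ) = ((1/2 - θ:ℝ):ℂ) := by exact_mod_cast congrArg Complex.ofReal hcl2
  have hfac1 : ∀ ξ:ℂ, (1 : ℂ) + (α : ℂ) * (θ : ℂ) - (α : ℂ) * (θ : ℂ) * ξ
      = ((1 + α*θ : ℝ):ℂ) * (1 - (l1:ℂ) * ξ) := by
    intro ξ
    push_cast at hcl1' ⊢
    linear_combination ξ * hcl1'
  have hfac2 : ∀ ξ:ℂ, ((3/2 : ℂ) - (θ : ℂ)) - ((2 : ℂ) - 2 * (θ : ℂ)) * ξ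
      + ((1/2 : ℂ) - (θ : ℂ)) * ξ ^ 2
      = ((3/2 - θ : ℝ):ℂ) * ((1 - ξ) * (1 - (l2:ℂ) * ξ)) := by
    intro ξ
    push_cast at hcl2' ⊢
    linear_combination (ξ - ξ^2) * hcl2'
  by_cases hdeg : l2 = -1 ∧ x = π
  · obtain ⟨hl2e, hxe⟩ := hdeg
    have hd2ne : (3 - 2*θ) ≠ 0 := ne_of_gt hd2
    rw [hl2e] at hl2
    have hθ1 : θ = 1 := by field_simp at hl2; linarith
    subst hxe
    have he1 : Complex.exp (Complex.I * (π:ℝ)) = -1 := by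
      rw [mul_comm]; exact_mod_cast Complex.exp_pi_mul_I
    have he2 : Complex.exp (-(Complex.I * (π:ℝ))) = -1 := by
      rw [Complex.exp_neg, he1]; norm_num
    rw [hω, hω, he1, he2]
    have hbase0 : ((3/2 : ℂ) - (θ : ℂ)) - ((2 : ℂ) - 2 * (θ : ℂ)) * (-1)
        + ((1/2 : ℂ) - (θ : ℂ)) * (-1) ^ 2 = 0 := by
      rw [hθ1]; norm_num
    rw [hbase0, Complex.zero_cpow (by exact_mod_cast hαne)]
    have hz2 : (1 + l2^2 - 2*l2*Real.cos π) = 0 := by rw [hl2e, Real.cos_pi]; ring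
    rw [hz2, Real.zero_rpow (div_ne_zero hαne two_ne_zero)]
    push_cast; ring
  · have ha1 : 0 < 1 - l1 * Real.cos x := by
      have h2 : |l1 * Real.cos x| < 1 := by
        rw [abs_mul]
        calc |l1| * |Real.cos x| ≤ |l1| * 1 :=
              mul_le_mul_of_nonneg_left (Real.abs_cos_le_one x) (abs_nonneg _)
          _ < 1 := by rw [mul_one]; exact abs_lt.mpr ⟨hl1m.1, hl1m.2⟩
      linarith [(abs_lt.mp h2).2]
    have ha2 : 0 < 1 - l2 * Real.cos x := by
      rcases eq_or_lt_of_le hl2m.1 with h | h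
      · have hxne : x ≠ π := fun hh => hdeg ⟨h.symm, hh⟩
        have hxlt : x < π := lt_of_le_of_ne hxπ hxne
        have hcc : Real.cos π < Real.cos x :=
          Real.cos_lt_cos_of_nonneg_of_le_pi (le_of_lt hx0) le_rfl hxlt
        rw [Real.cos_pi] at hcc
        rw [← h]; linarith
      · have h2 : |l2 * Real.cos x| < 1 := by
          rw [abs_mul]
          calc |l2| * |Real.cos x| ≤ |l2| * 1 :=
                mul_le_mul_of_nonneg_left (Real.abs_cos_le_one x) (abs_nonneg _)
            _ < 1 := by rw [mul_one]; exact abs_lt.mpr ⟨h, hl2m.2⟩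
        linarith [(abs_lt.mp h2).2]
    have hA1pos : 0 < (1 + l1^2 - 2*l1*Real.cos x) := by
      nlinarith [Real.sin_sq_add_cos_sq x, sq_nonneg (l1 * Real.sin x), ha1, sq_nonneg (1 - l1*Real.cos x)]
    have hA2pos : 0 < (1 + l2^2 - 2*l2*Real.cos x) := by
      nlinarith [Real.sin_sq_add_cos_sq x, sq_nonneg (l2 * Real.sin x), ha2, sq_nonneg (1 - l2*Real.cos x)]
    have hp1 := polarFactor l1 x ha1
    have hp1' := polarFactor' l1 x ha1
    have hp2 := polarFactor l2 x ha2
    have hp2' := polarFactor' l2 x ha2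
    rw [← hφ1 x] at hp1 hp1'
    rw [← hφ2 x] at hp2 hp2'
    have h3 := oneSubExp x
    have h3' := oneSubExp' x
    have hr2pos : 0 < Real.sqrt (1 + l2^2 - 2*l2*Real.cos x) := Real.sqrt_pos.mpr hA2pos
    have hr1pos : 0 < Real.sqrt (1 + l1^2 - 2*l1*Real.cos x) := Real.sqrt_pos.mpr hA1pos
    have hRpos : 0 < ((3/2 - θ) * ((2*Real.sin (x/2)) * Real.sqrt (1 + l2^2 - 2*l2*Real.cos x))) := by positivity
    have hφ2b1 : -(π/2) < φ2 x := by rw [hφ2]; exact Real.neg_pi_div_two_lt_arctan _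
    have hφ2b2 : φ2 x < π/2 := by rw [hφ2]; exact Real.arctan_lt_pi_div_two _
    have hΦ1 : -π < ((x-π)/2 + φ2 x) := by linarith
    have hΦ2 : ((x-π)/2 + φ2 x) < π := by linarith
    have hbasee : ((3/2 : ℂ) - (θ : ℂ)) - ((2 : ℂ) - 2 * (θ : ℂ)) * Complex.exp (Complex.I * x)
        + ((1/2 : ℂ) - (θ : ℂ)) * Complex.exp (Complex.I * x) ^ 2
        = ((((3/2 - θ) * ((2*Real.sin (x/2)) * Real.sqrt (1 + l2^2 - 2*l2*Real.cos x))) : ℝ):ℂ) * Complex.exp (((((x-π)/2 + φ2 x) : ℝ):ℂ) * Complex.I) := by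
      rw [hfac2, h3, hp2, mulPolar]
      push_cast; ring
    have hbasee' : ((3/2 : ℂ) - (θ : ℂ)) - ((2 : ℂ) - 2 * (θ : ℂ)) * Complex.exp (-(Complex.I * x))
        + ((1/2 : ℂ) - (θ : ℂ)) * Complex.exp (-(Complex.I * x)) ^ 2
        = ((((3/2 - θ) * ((2*Real.sin (x/2)) * Real.sqrt (1 + l2^2 - 2*l2*Real.cos x))) : ℝ):ℂ) * Complex.exp (((-((x-π)/2 + φ2 x) : ℝ):ℂ) * Complex.I) := by
      rw [hfac2, h3', hp2', mulPolar]
      push_cast; ring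
    have hcp : (((((3/2 - θ) * ((2*Real.sin (x/2)) * Real.sqrt (1 + l2^2 - 2*l2*Real.cos x))) : ℝ):ℂ) * Complex.exp (((((x-π)/2 + φ2 x) : ℝ):ℂ) * Complex.I)) ^ (α:ℂ)
        = (((((3/2 - θ) * ((2*Real.sin (x/2)) * Real.sqrt (1 + l2^2 - 2*l2*Real.cos x))) ^ α) : ℝ):ℂ) * Complex.exp (((α * ((x-π)/2 + φ2 x) : ℝ):ℂ) * Complex.I) :=
      cpow_polar_s13 _ _ _ hRpos hΦ1 (le_of_lt hΦ2)
    have hcp' : (((((3/2 - θ) * ((2*Real.sin (x/2)) * Real.sqrt (1 + l2^2 - 2*l2*Real.cos x))) : ℝ):ℂ) * Complex.exp (((-((x-π)/2 + φ2 x) : ℝ):ℂ) * Complex.I)) ^ (α:ℂ)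
        = (((((3/2 - θ) * ((2*Real.sin (x/2)) * Real.sqrt (1 + l2^2 - 2*l2*Real.cos x))) ^ α) : ℝ):ℂ) * Complex.exp (((α * -((x-π)/2 + φ2 x) : ℝ):ℂ) * Complex.I) :=
      cpow_polar_s13 _ _ _ hRpos (by linarith) (by linarith)
    have m1 := mulPolar (Real.sqrt (1 + l1^2 - 2*l1*Real.cos x)) (((3/2 - θ) * ((2*Real.sin (x/2)) * Real.sqrt (1 + l2^2 - 2*l2*Real.cos x))) ^ α) (φ1 x) (α * ((x-π)/2 + φ2 x))
    have m2 := mulPolar (Real.sqrt (1 + l1^2 - 2*l1*Real.cos x)) (((3/2 - θ) * ((2*Real.sin (x/2)) * Real.sqrt (1 + l2^2 - 2*l2*Real.cos x))) ^ α) (-(φ1 x)) (α * -((x-π)/2 + φ2 x))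
    rw [show (-(φ1 x) + α * -((x-π)/2 + φ2 x)) = -(φ1 x + α * ((x-π)/2 + φ2 x)) by ring] at m2
    have m3 := expCosSum (φ1 x + α * ((x-π)/2 + φ2 x))
    have hfin : ((3/2 - θ) ^ α * (1 + α*θ) * (2 * Real.sin (x/2)) ^ α *
          (1 + l1^2 - 2*l1*Real.cos x) ^ ((1:ℝ)/2) * (1 + l2^2 - 2*l2*Real.cos x) ^ (α/2) *
          Real.cos ((α/2) * (x - π) + φ1 x + α * φ2 x) : ℝ)
        = (1 + α*θ) * (Real.sqrt (1 + l1^2 - 2*l1*Real.cos x) * (((3/2 - θ) * ((2*Real.sin (x/2)) * Real.sqrt (1 + l2^2 - 2*l2*Real.cos x))) ^ α)) * Real.cos (φ1 x + α * ((x-π)/2 + φ2 x)) := by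
      rw [show (φ1 x + α * ((x-π)/2 + φ2 x)) = (α/2) * (x - π) + φ1 x + α * φ2 x by ring]
      rw [Real.mul_rpow (le_of_lt hc0) (by positivity),
          Real.mul_rpow (by positivity) (Real.sqrt_nonneg _),
          Real.sqrt_eq_rpow (1 + l1^2 - 2*l1*Real.cos x), Real.sqrt_eq_rpow (1 + l2^2 - 2*l2*Real.cos x),
          ← Real.rpow_mul (le_of_lt hA2pos),
          show ((1:ℝ)/2*α) = α/2 by ring]
      ring
    have hfinC := congrArg (fun t : ℝ => (t : ℂ)) hfin
    rw [hω, hω, hfac1, hfac1, hbasee, hbasee', hcp, hcp', hp1, hp1']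
    push_cast at m1 m2 m3 hfinC ⊢
    linear_combination ((1:ℂ) + α*θ)/2 * m1 + ((1:ℂ) + α*θ)/2 * m2
      + (((1:ℂ) + α*θ) * ((Real.sqrt (1 + l1^2 - 2*l1*Real.cos x) : ℝ):ℂ)
          * (((((3/2 - θ) * (2*Real.sin (x/2) * Real.sqrt (1 + l2^2 - 2*l2*Real.cos x))) ^ α : ℝ)):ℂ))/2 * m3
      - hfinC
end
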